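/- arXiv:1812.04531 — 2 statements merged into one kernel-verified Lean document; each statement's English description precedes it below -/
import Mathlib

section
/- Let r, p, n be positive integers with p dividing r and let k be a nonnegative integer. Then the ℂ-linear span of {φ_{k+1}(x_d) : d ∈ A_{k+1/2}(r,p,n)} in End(V^{⊗(k+1)}) is closed under composition. -/
open scoped Classical
open Matrix

noncomputable section

namespace Tanabe

/-! ## Tensor space model of `V^{⊗k}` for `V = ℂ^n`.
A tensor is encoded by its coordinates, i.e. a function `(Fin k → Fin n) → ℂ`;
the basis vector `v_{i_1} ⊗ ⋯ ⊗ v_{i_k}` corresponds to the indicator function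
of the tuple `(i_1, …, i_k)`. -/

abbrev TP (n k : ℕ) : Type := (Fin k → Fin n) → ℂ

/-- The linear endomorphism of `V^{⊗k}` with matrix `K` in the standard basis:
it sends the basis vector indexed by the tuple `i` to `∑ₒ K o i • (basis vector o)`. -/
def kernelMap (n k : ℕ) (K : (Fin k → Fin n) → (Fin k → Fin n) → ℂ) :
    TP n k →ₗ[ℂ] TP n k where
  toFun f := fun o => ∑ i : Fin k → Fin n, K o i * f i
  map_add' f g := by
    funext o
    simp only [Pi.add_apply, mul_add]
    exact Finset.sum_add_distrib
  map_smul' c f := by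
    funext o
    simp only [Pi.smul_apply, smul_eq_mul, RingHom.id_apply]
    rw [Finset.mul_sum]
    exact Finset.sum_congr rfl fun i _ => by ring

/-- The diagonal (tensor-power) action `g^{⊗k}` of a matrix `g` on `V^{⊗k}`. -/
def tensorPow (n k : ℕ) (g : Matrix (Fin n) (Fin n) ℂ) : TP n k →ₗ[ℂ] TP n k :=
  kernelMap n k fun o i => ∏ t : Fin k, g (o t) (i t)

/-! ## Set partitions of `{1,…,t,1′,…,t′}`.
A set partition of `{1,…,t,1′,…,t′}` is encoded as a `Setoid` on `Fin t ⊕ Fin t`,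
with `Sum.inl` the unprimed (top row) elements and `Sum.inr` the primed (bottom row)
elements; blocks are the equivalence classes. -/

abbrev SP (t : ℕ) : Type := Setoid (Fin t ⊕ Fin t)

/-- `N(B)`: number of top-row (unprimed) elements in the block `q` of `d`. -/
def topCt {t : ℕ} (d : SP t) (q : Quotient d) : ℕ :=
  Nat.card {a : Fin t // Quotient.mk d (Sum.inl a) = q}

/-- `M(B)`: number of bottom-row (primed) elements in the block `q` of `d`. -/
def botCt {t : ℕ} (d : SP t) (q : Quotient d) : ℕ :=
  Nat.card {a : Fin t // Quotient.mk d (Sum.inr a) = q}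

/-- `|d|`: the number of blocks of `d`. -/
def nBlocks {t : ℕ} (d : SP t) : ℕ := Nat.card (Quotient d)

/-- Coefficient of `φ_t(x_d)`: equals `1` if the equalities among the values of the
combined tuple `c` are *exactly* those prescribed by `d`, and `0` otherwise. -/
def coeX (n t : ℕ) (d : SP t) (c : Fin t ⊕ Fin t → Fin n) : ℂ :=
  if ∀ a b : Fin t ⊕ Fin t, d.r a b ↔ c a = c b then 1 else 0

/-- Coefficient of `φ_t(d)` (the diagram basis): equals `1` if the values of the
combined tuple `c` agree on each block of `d`, and `0` otherwise. -/
def coeD (n t : ℕ) (d : SP t) (c : Fin t ⊕ Fin t → Fin n) : ℂ :=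
  if ∀ a b : Fin t ⊕ Fin t, d.r a b → c a = c b then 1 else 0

/-- The operator `φ_t(x_d)` on `V^{⊗t}`. -/
def phiX (n t : ℕ) (d : SP t) : TP n t →ₗ[ℂ] TP n t :=
  kernelMap n t fun o i => coeX n t d (Sum.elim i o)

/-- The operator `φ_t(d)` on `V^{⊗t}` (diagram basis). -/
def phiD (n t : ℕ) (d : SP t) : TP n t →ₗ[ℂ] TP n t :=
  kernelMap n t fun o i => coeD n t d (Sum.elim i o)

/-- `d ∈ Π_t(r)` : every block `B` satisfies `N(B) ≡ M(B) (mod r)`. -/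
def inPi (r : ℕ) {t : ℕ} (d : SP t) : Prop :=
  ∀ q : Quotient d, (topCt d q : ℤ) ≡ (botCt d q : ℤ) [ZMOD (r : ℤ)]

/-- `d ∈ Λ_t(r,p,n)` (here `m = r/p`). -/
def inLambda (r p n : ℕ) {t : ℕ} (d : SP t) : Prop :=
  nBlocks d = n ∧
  (∀ q : Quotient d,
    ((topCt d q : ℤ) ≡ (botCt d q : ℤ) [ZMOD ((r / p : ℕ) : ℤ)]) ∧
    ¬ ((topCt d q : ℤ) ≡ (botCt d q : ℤ) [ZMOD (r : ℤ)])) ∧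
  (∀ q q' : Quotient d,
    (topCt d q : ℤ) - (botCt d q : ℤ) ≡ (topCt d q' : ℤ) - (botCt d q' : ℤ) [ZMOD (r : ℤ)])

/-- `d ∈ Θ_t(r,p,n)` (here `m = r/p`). -/
def inTheta (r p n : ℕ) {t : ℕ} (d : SP t) : Prop :=
  n < nBlocks d ∧
  (∀ q : Quotient d, (topCt d q : ℤ) ≡ (botCt d q : ℤ) [ZMOD ((r / p : ℕ) : ℤ)]) ∧
  ∃ q : Quotient d, ¬ ((topCt d q : ℤ) ≡ (botCt d q : ℤ) [ZMOD (r : ℤ)])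

/-- `d ∈ A_t(r,p,n) = Π_t(r) ∪ Λ_t(r,p,n) ∪ Θ_t(r,p,n)`. -/
def inA (r p n : ℕ) {t : ℕ} (d : SP t) : Prop :=
  inPi r d ∨ inLambda r p n d ∨ inTheta r p n d

/-- `d ∈ A_{k+1/2}` : `k+1` and `(k+1)′` lie in the same block. -/
def isHalf (k : ℕ) (d : SP (k + 1)) : Prop :=
  d.r (Sum.inl (Fin.last k)) (Sum.inr (Fin.last k))

/-- `d ∈ Π_t(r,p,n)` : `d ∈ A_t(r,p,n)` with at most `n` blocks. -/
def inPiRPN (r p n : ℕ) {t : ℕ} (d : SP t) : Prop :=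
  inA r p n d ∧ nBlocks d ≤ n

/-- `{φ_k(x_d) : d ∈ A_k(r,p,n)}`. -/
def TanSet (r p n k : ℕ) : Set (TP n k →ₗ[ℂ] TP n k) :=
  {T | ∃ d : SP k, inA r p n d ∧ T = phiX n k d}

/-- `{φ_{k+1}(x_d) : d ∈ A_{k+1/2}(r,p,n)}` (as endomorphisms of `V^{⊗(k+1)}`). -/
def TanSetHalf (r p n k : ℕ) : Set (TP n (k + 1) →ₗ[ℂ] TP n (k + 1)) :=
  {T | ∃ d : SP (k + 1), (inA r p n d ∧ isHalf k d) ∧ T = phiX n (k + 1) d}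

/-! ## The groups `G(r,p,n)` and `L(r,p,n)` as matrix groups. -/

/-- The monomial matrix with underlying permutation `π` and weights `a` :
its `(i,j)` entry is `a j` if `i = π j` and `0` otherwise, so that it maps
`v_j ↦ a j • v_{π j}`. -/
def monoMat (n : ℕ) (π : Equiv.Perm (Fin n)) (a : Fin n → ℂ) :
    Matrix (Fin n) (Fin n) ℂ :=
  Matrix.of fun i j => if i = π j then a j else 0

/-- `G(r,p,n)` as a set of matrices: matrices with exactly one nonzero entry in each
row and column, whose nonzero entries are `r`-th roots of unity, and such that the
`m = r/p`-th power of the product of the nonzero entries is `1`. -/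
def GSet (r p n : ℕ) : Set (Matrix (Fin n) (Fin n) ℂ) :=
  {g | ∃ (π : Equiv.Perm (Fin n)) (a : Fin n → ℂ),
    (∀ i, a i ^ r = 1) ∧ (∏ i, a i) ^ (r / p) = 1 ∧ g = monoMat n π a}

/-- The last index of `Fin n` (position `n` in 1-indexed notation). -/
def lastIdx (n : ℕ) (hn : 0 < n) : Fin n := ⟨n - 1, by omega⟩

/-- `L(r,p,n)` as a set of matrices: elements of `G(r,p,n)` whose `(n,n)` entry
is nonzero. -/
def LSet (r p n : ℕ) (hn : 0 < n) : Set (Matrix (Fin n) (Fin n) ℂ) :=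
  {g | g ∈ GSet r p n ∧ g (lastIdx n hn) (lastIdx n hn) ≠ 0}

/-- The centralizer algebra `End_{G(r,p,n)}(V^{⊗k})`. -/
def centG (r p n k : ℕ) : Set (TP n k →ₗ[ℂ] TP n k) :=
  {F | ∀ g ∈ GSet r p n, F ∘ₗ tensorPow n k g = tensorPow n k g ∘ₗ F}

/-- The subspace `W = V^{⊗k} ⊗ ℂ v_n` of `V^{⊗(k+1)}` : coordinate functions
supported on tuples whose last entry is the last index. -/
def Wsub (n k : ℕ) (hn : 0 < n) : Submodule ℂ (TP n (k + 1)) where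
  carrier := {f | ∀ j : Fin (k + 1) → Fin n, j (Fin.last k) ≠ lastIdx n hn → f j = 0}
  add_mem' := by
    intro a b ha hb j hj
    simp [Pi.add_apply, ha j hj, hb j hj]
  zero_mem' := by intro j hj; rfl
  smul_mem' := by
    intro c a ha j hj
    simp [Pi.smul_apply, ha j hj]


/-! ## Group structure -/

abbrev GLn (n : ℕ) := Matrix.GeneralLinearGroup (Fin n) ℂ

lemma monoMat_mul (n : ℕ) (π σ : Equiv.Perm (Fin n)) (a b : Fin n → ℂ) :
    monoMat n π a * monoMat n σ b = monoMat n (π * σ) (fun j => a (σ j) * b j) := by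
  ext i j
  simp only [monoMat, Matrix.mul_apply, Matrix.of_apply, mul_ite, mul_zero, ite_mul, zero_mul]
  rw [Finset.sum_ite_eq' Finset.univ (σ j)]
  simp [Equiv.Perm.mul_apply]
  congr

lemma monoMat_one (n : ℕ) : monoMat n 1 (fun _ => (1 : ℂ)) = 1 := by
  ext i j
  simp [monoMat, Matrix.one_apply]
  congr

lemma one_mem_GSet (r p n : ℕ) : (1 : Matrix (Fin n) (Fin n) ℂ) ∈ GSet r p n :=
  ⟨1, fun _ => 1, fun _ => one_pow r, by simp, (monoMat_one n).symm⟩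

lemma mul_mem_GSet {r p n : ℕ} {g h : Matrix (Fin n) (Fin n) ℂ}
    (hg : g ∈ GSet r p n) (hh : h ∈ GSet r p n) : g * h ∈ GSet r p n := by
  obtain ⟨π, a, ha, hpa, rfl⟩ := hg
  obtain ⟨σ, b, hb, hpb, rfl⟩ := hh
  refine ⟨π * σ, fun j => a (σ j) * b j, fun i => by rw [mul_pow, ha, hb, one_mul], ?_,
    monoMat_mul n π σ a b⟩
  have h1 : (∏ i, (a (σ i) * b i)) = (∏ i, a i) * ∏ i, b i := by
    rw [Finset.prod_mul_distrib, Equiv.prod_comp σ a]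
  rw [h1, mul_pow, hpa, hpb, one_mul]

lemma a_ne_zero {r : ℕ} (hr : 0 < r) {a : ℂ} (ha : a ^ r = 1) : a ≠ 0 := by
  intro h0
  rw [h0, zero_pow hr.ne'] at ha
  exact zero_ne_one ha

lemma monoMat_mul_inv (n : ℕ) (π : Equiv.Perm (Fin n)) (a : Fin n → ℂ)
    (ha : ∀ i, a i ≠ 0) :
    monoMat n π a * monoMat n π⁻¹ (fun j => (a (π⁻¹ j))⁻¹) = 1 := by
  simp only [monoMat_mul]
  rw [mul_inv_cancel,
    show (fun j => a (π⁻¹ j) * (a (π⁻¹ j))⁻¹) = fun _ : Fin n => (1 : ℂ) from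
      funext fun j => mul_inv_cancel₀ (ha _),
    monoMat_one]

/-- The value of the inverse of a unit whose underlying matrix is a monomial matrix. -/
lemma gl_inv_val {n : ℕ} (g : GLn n) (π : Equiv.Perm (Fin n)) (a : Fin n → ℂ)
    (ha : ∀ i, a i ≠ 0) (hg : (↑g : Matrix (Fin n) (Fin n) ℂ) = monoMat n π a) :
    (↑g⁻¹ : Matrix (Fin n) (Fin n) ℂ) = monoMat n π⁻¹ (fun j => (a (π⁻¹ j))⁻¹) := by
  have hmul : (↑g : Matrix (Fin n) (Fin n) ℂ) *
      monoMat n π⁻¹ (fun j => (a (π⁻¹ j))⁻¹) = 1 := by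
    rw [hg]; exact monoMat_mul_inv n π a ha
  calc (↑g⁻¹ : Matrix (Fin n) (Fin n) ℂ)
      = ↑g⁻¹ * ((↑g : Matrix (Fin n) (Fin n) ℂ) *
          monoMat n π⁻¹ (fun j => (a (π⁻¹ j))⁻¹)) := by rw [hmul, mul_one]
    _ = ((↑g⁻¹ : Matrix (Fin n) (Fin n) ℂ) * ↑g) *
          monoMat n π⁻¹ (fun j => (a (π⁻¹ j))⁻¹) := by rw [mul_assoc]
    _ = monoMat n π⁻¹ (fun j => (a (π⁻¹ j))⁻¹) := by
          rw [← Units.val_mul, inv_mul_cancel, Units.val_one, one_mul]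

lemma inv_mem_GSet {r p n : ℕ} (hr : 0 < r) {g : GLn n}
    (hg : (↑g : Matrix (Fin n) (Fin n) ℂ) ∈ GSet r p n) :
    (↑g⁻¹ : Matrix (Fin n) (Fin n) ℂ) ∈ GSet r p n := by
  obtain ⟨π, a, ha, hpa, hgm⟩ := hg
  have hane : ∀ i, a i ≠ 0 := fun i => a_ne_zero hr (ha i)
  refine ⟨π⁻¹, fun j => (a (π⁻¹ j))⁻¹, fun i => by rw [inv_pow, ha, inv_one], ?_,
    gl_inv_val g π a hane hgm⟩
  rw [Finset.prod_inv_distrib, Equiv.prod_comp π⁻¹ a, inv_pow, hpa, inv_one]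

/-- The complex reflection group `G(r,p,n)` as a subgroup of `GL_n(ℂ)`. -/
def GGroup (r p n : ℕ) (hr : 0 < r) : Subgroup (GLn n) where
  carrier := {g | (↑g : Matrix (Fin n) (Fin n) ℂ) ∈ GSet r p n}
  one_mem' := by
    show (↑(1 : GLn n) : Matrix (Fin n) (Fin n) ℂ) ∈ GSet r p n
    rw [Units.val_one]; exact one_mem_GSet r p n
  mul_mem' := by
    intro g h hg hh
    show (↑(g * h) : Matrix (Fin n) (Fin n) ℂ) ∈ GSet r p n
    rw [Units.val_mul]; exact mul_mem_GSet hg hh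
  inv_mem' := by
    intro g hg
    exact inv_mem_GSet hr hg

lemma monoMat_last {n : ℕ} (hn : 0 < n) (π : Equiv.Perm (Fin n)) (a : Fin n → ℂ)
    (h : monoMat n π a (lastIdx n hn) (lastIdx n hn) ≠ 0) :
    π (lastIdx n hn) = lastIdx n hn ∧ a (lastIdx n hn) ≠ 0 := by
  by_cases hp : lastIdx n hn = π (lastIdx n hn)
  · refine ⟨hp.symm, ?_⟩
    intro h0
    apply h
    simp [monoMat, ← hp, h0]
  · exfalso; apply h; simp [monoMat, hp]

lemma monoMat_last_entry {n : ℕ} (hn : 0 < n) (π : Equiv.Perm (Fin n)) (a : Fin n → ℂ)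
    (hp : π (lastIdx n hn) = lastIdx n hn) :
    monoMat n π a (lastIdx n hn) (lastIdx n hn) = a (lastIdx n hn) := by
  simp [monoMat, hp]

/-- The subgroup `L(r,p,n)` of `G(r,p,n)` (matrices with nonzero `(n,n)` entry). -/
def LGroup (r p n : ℕ) (hr : 0 < r) (hn : 0 < n) : Subgroup (GLn n) where
  carrier := {g | (↑g : Matrix (Fin n) (Fin n) ℂ) ∈ LSet r p n hn}
  one_mem' := by
    refine ⟨?_, ?_⟩
    · show (↑(1 : GLn n) : Matrix (Fin n) (Fin n) ℂ) ∈ GSet r p n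
      rw [Units.val_one]; exact one_mem_GSet r p n
    · rw [Units.val_one]
      simp [Matrix.one_apply]
  mul_mem' := by
    rintro g h ⟨hg, hge⟩ ⟨hh, hhe⟩
    refine ⟨?_, ?_⟩
    · show (↑(g * h) : Matrix (Fin n) (Fin n) ℂ) ∈ GSet r p n
      rw [Units.val_mul]; exact mul_mem_GSet hg hh
    · obtain ⟨π, a, ha, hpa, hgm⟩ := hg
      obtain ⟨σ, b, hb, hpb, hhm⟩ := hh
      rw [hgm] at hge
      rw [hhm] at hhe
      obtain ⟨hπ, ha0⟩ := monoMat_last hn π a hge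
      obtain ⟨hσ, hb0⟩ := monoMat_last hn σ b hhe
      rw [Units.val_mul, hgm, hhm, monoMat_mul]
      rw [monoMat_last_entry hn _ _ (by simp [Equiv.Perm.mul_apply, hσ, hπ])]
      simp only [hσ]
      exact mul_ne_zero ha0 hb0
  inv_mem' := by
    rintro g ⟨hg, hge⟩
    obtain ⟨π, a, ha, hpa, hgm⟩ := hg
    have hane : ∀ i, a i ≠ 0 := fun i => a_ne_zero hr (ha i)
    rw [hgm] at hge
    obtain ⟨hπ, ha0⟩ := monoMat_last hn π a hge
    refine ⟨inv_mem_GSet hr ⟨π, a, ha, hpa, hgm⟩, ?_⟩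
    rw [gl_inv_val g π a hane hgm]
    have hπi : π⁻¹ (lastIdx n hn) = lastIdx n hn := by
      conv_lhs => rw [← hπ]
      simp
    rw [monoMat_last_entry hn _ _ hπi]
    simp only [hπi]
    exact inv_ne_zero ha0

lemma GGroup_le (r p n : ℕ) (hr : 0 < r) : GGroup r p n hr ≤ GGroup r 1 n hr := by
  rintro g ⟨π, a, ha, hpa, hgm⟩
  refine ⟨π, a, ha, ?_, hgm⟩
  rw [Nat.div_one, ← Finset.prod_pow]
  simp [ha]

lemma LGroup_le (r p n : ℕ) (hr : 0 < r) (hn : 0 < n) :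
    LGroup r p n hr hn ≤ LGroup r 1 n hr hn := by
  rintro g ⟨hg, hge⟩
  exact ⟨GGroup_le r p n hr hg, hge⟩

lemma LGroup_le_GGroup (r p n : ℕ) (hr : 0 < r) (hn : 0 < n) :
    LGroup r p n hr hn ≤ GGroup r p n hr := fun _ hg => hg.1

lemma LGroup_le_G1 (r p n : ℕ) (hr : 0 < r) (hn : 0 < n) :
    LGroup r p n hr hn ≤ GGroup r 1 n hr :=
  le_trans (LGroup_le_GGroup r p n hr hn) (GGroup_le r p n hr)

/-! ## Representation-theoretic notions -/

section Reps

variable {G : Type*} [Monoid G] {V : Type*} [AddCommGroup V] [Module ℂ V]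

/-- A submodule invariant under a representation. -/
def RepInvariant (ρ : Representation ℂ G V) (q : Submodule ℂ V) : Prop :=
  ∀ (g : G), ∀ v ∈ q, ρ g v ∈ q

/-- Irreducibility of a representation. -/
def RepIrreducible (ρ : Representation ℂ G V) : Prop :=
  Nontrivial V ∧ ∀ q : Submodule ℂ V, RepInvariant ρ q → q = ⊥ ∨ q = ⊤

/-- Irreducibility of an invariant subspace, as a subrepresentation. -/
def SubIrreducible (ρ : Representation ℂ G V) (q : Submodule ℂ V) : Prop :=
  q ≠ ⊥ ∧ ∀ q' : Submodule ℂ V, q' ≤ q → RepInvariant ρ q' → q' = ⊥ ∨ q' = q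

/-- Two (invariant) subspaces are isomorphic as subrepresentations: there is a
`ℂ`-linear equivalence between them intertwining the action. -/
def IsSubrepIso (ρ : Representation ℂ G V) (q q' : Submodule ℂ V) : Prop :=
  ∃ e : q ≃ₗ[ℂ] q', ∀ (g : G) (x : V) (hx : x ∈ q) (hgx : ρ g x ∈ q),
    ((e ⟨ρ g x, hgx⟩ : q') : V) = ρ g ((e ⟨x, hx⟩ : q') : V)

/-- A representation is multiplicity free: it is an (internal) direct sum of
pairwise non-isomorphic irreducible subrepresentations. -/
def RepMultFree (ρ : Representation ℂ G V) : Prop :=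
  ∃ (ι : Type) (_ : Fintype ι) (W : ι → Submodule ℂ V),
    (∀ i, RepInvariant ρ (W i)) ∧
    (∀ i, SubIrreducible ρ (W i)) ∧
    iSupIndep W ∧ (⨆ i, W i) = ⊤ ∧
    (∀ i j, i ≠ j → ¬ IsSubrepIso ρ (W i) (W j))

/-- Restriction of a representation of `K` to a subgroup `H ≤ K`. -/
def restrictRep {G : Type*} [Group G] {H K : Subgroup G} (h : H ≤ K)
    (ρ : Representation ℂ ↥K V) : Representation ℂ ↥H V :=
  MonoidHom.comp ρ (Subgroup.inclusion h)

end Reps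

/-! ## The elements `ζ_i^l ζ_j^{-l} s_{ij}` and the central elements `κ` -/

/-- `ζ = exp(2πi/r)`, a primitive `r`-th root of unity. -/
def zeta (r : ℕ) : ℂ := Complex.exp (2 * Real.pi * Complex.I / r)

lemma zeta_pow_self {r : ℕ} (hr : 0 < r) : zeta r ^ r = 1 := by
  rw [zeta, ← Complex.exp_nat_mul]
  rw [show (r : ℂ) * (2 * Real.pi * Complex.I / r) = 2 * Real.pi * Complex.I by
    rw [mul_div_assoc']
    exact mul_div_cancel_left₀ _ (Nat.cast_ne_zero.mpr hr.ne')]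
  exact Complex.exp_two_pi_mul_I

lemma zeta_ne_zero (r : ℕ) : zeta r ≠ 0 := Complex.exp_ne_zero _

/-- Weights of the monomial matrix `ζ_i^l ζ_j^{-l} s_{ij}` : `ζ^l` in position `i`,
`ζ^{-l}` in position `j`, `1` elsewhere. -/
def zijWt (r l : ℕ) {n : ℕ} (i j : Fin n) : Fin n → ℂ :=
  fun t => if t = i then zeta r ^ l else if t = j then (zeta r ^ l)⁻¹ else 1

/-- The matrix `ζ_i^l ζ_j^{-l} s_{ij}`. -/
def zijMat (n r l : ℕ) (i j : Fin n) : Matrix (Fin n) (Fin n) ℂ :=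
  monoMat n (Equiv.swap i j) (zijWt r l i j)

lemma zijWt_ne_zero (r l : ℕ) {n : ℕ} (i j : Fin n) (t : Fin n) :
    zijWt r l i j t ≠ 0 := by
  unfold zijWt
  split_ifs
  · exact pow_ne_zero _ (zeta_ne_zero r)
  · exact inv_ne_zero (pow_ne_zero _ (zeta_ne_zero r))
  · exact one_ne_zero

lemma zijWt_pow {r l : ℕ} (hr : 0 < r) {n : ℕ} (i j : Fin n) (t : Fin n) :
    zijWt r l i j t ^ r = 1 := by
  unfold zijWt
  split_ifs
  · rw [← pow_mul, mul_comm, pow_mul, zeta_pow_self hr, one_pow]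
  · rw [inv_pow, ← pow_mul, mul_comm, pow_mul, zeta_pow_self hr, one_pow, inv_one]
  · exact one_pow r

lemma zijWt_prod {r l : ℕ} {n : ℕ} {i j : Fin n} (hij : i ≠ j) :
    (∏ t, zijWt r l i j t) = 1 := by
  have hfun : (fun t => zijWt r l i j t) =
      fun t => (if t = i then zeta r ^ l else 1) * (if t = j then (zeta r ^ l)⁻¹ else 1) := by
    funext t
    by_cases h1 : t = i <;> by_cases h2 : t = j
    · exact absurd (h1.symm.trans h2) hij
    · simp [zijWt, h1, h2, hij]
    · simp [zijWt, h1, h2, hij, Ne.symm hij]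
    · simp [zijWt, h1, h2]
  rw [hfun, Finset.prod_mul_distrib, Finset.prod_ite_eq' Finset.univ i,
    Finset.prod_ite_eq' Finset.univ j]
  simp [mul_inv_cancel₀ (pow_ne_zero l (zeta_ne_zero r))]

lemma zij_mem_GSet (r p n l : ℕ) (hr : 0 < r) (i j : Fin n) (hij : i ≠ j) :
    zijMat n r l i j ∈ GSet r p n := by
  refine ⟨Equiv.swap i j, zijWt r l i j, zijWt_pow hr i j, ?_, rfl⟩
  rw [zijWt_prod hij, one_pow]

/-- A monomial matrix with nonzero weights, as an element of `GL_n(ℂ)`. -/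
def monoUnit (n : ℕ) (π : Equiv.Perm (Fin n)) (a : Fin n → ℂ) (ha : ∀ i, a i ≠ 0) :
    GLn n where
  val := monoMat n π a
  inv := monoMat n π⁻¹ (fun j => (a (π⁻¹ j))⁻¹)
  val_inv := monoMat_mul_inv n π a ha
  inv_val := by
    simp only [monoMat_mul]
    rw [inv_mul_cancel,
      show (fun j => (a (π⁻¹ (π j)))⁻¹ * a j) = fun _ : Fin n => (1 : ℂ) from
        funext fun j => by rw [Equiv.Perm.inv_def, Equiv.symm_apply_apply, inv_mul_cancel₀ (ha _)],
      monoMat_one]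

/-- The element `ζ_i^l ζ_j^{-l} s_{ij}` of `G(r,p,n)`. -/
def zijG (r p n l : ℕ) (hr : 0 < r) (i j : Fin n) (hij : i ≠ j) : ↥(GGroup r p n hr) :=
  ⟨monoUnit n (Equiv.swap i j) (zijWt r l i j) (zijWt_ne_zero r l i j),
   zij_mem_GSet r p n l hr i j hij⟩

/-- The element `κ_{r,n} = (1/r)·Σ_{l<r} Σ_{i<j} ζ_i^l ζ_j^{-l} s_{ij}` of the group
algebra `ℂ[G(r,p,n)]`. -/
def kappaGA (r p n : ℕ) (hr : 0 < r) : MonoidAlgebra ℂ ↥(GGroup r p n hr) :=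
  (1 / (r : ℂ)) • ∑ l ∈ Finset.range r, ∑ i : Fin n, ∑ j : Fin n,
    if h : i < j then MonoidAlgebra.single (zijG r p n l hr i j h.ne) 1 else 0

lemma zijL_last (r l : ℕ) {n : ℕ} (hn : 0 < n) (i j : Fin n)
    (hi : i ≠ lastIdx n hn) (hj : j ≠ lastIdx n hn) :
    zijMat n r l i j (lastIdx n hn) (lastIdx n hn) ≠ 0 := by
  have hswap : Equiv.swap i j (lastIdx n hn) = lastIdx n hn :=
    Equiv.swap_apply_of_ne_of_ne (Ne.symm hi) (Ne.symm hj)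
  rw [zijMat, monoMat_last_entry hn _ _ hswap]
  exact zijWt_ne_zero r l i j _

/-- The element `ζ_i^l ζ_j^{-l} s_{ij}` of `L(r,p,n)`, for `i, j ≤ n-1`. -/
def zijL (r p n l : ℕ) (hr : 0 < r) (hn : 0 < n) (i j : Fin n) (hij : i ≠ j)
    (hi : i ≠ lastIdx n hn) (hj : j ≠ lastIdx n hn) : ↥(LGroup r p n hr hn) :=
  ⟨monoUnit n (Equiv.swap i j) (zijWt r l i j) (zijWt_ne_zero r l i j),
   ⟨zij_mem_GSet r p n l hr i j hij, zijL_last r l hn i j hi hj⟩⟩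

/-- The element `κ_{r,n-1} = (1/r)·Σ_{l<r} Σ_{1≤i<j≤n-1} ζ_i^l ζ_j^{-l} s_{ij}` of the
group algebra `ℂ[L(r,p,n)]`. -/
def kappaLA (r p n : ℕ) (hr : 0 < r) (hn : 0 < n) :
    MonoidAlgebra ℂ ↥(LGroup r p n hr hn) :=
  (1 / (r : ℂ)) • ∑ l ∈ Finset.range r, ∑ i : Fin n, ∑ j : Fin n,
    if h : i < j ∧ (j : ℕ) < n - 1 then
      MonoidAlgebra.single
        (zijL r p n l hr hn i j h.1.ne
          (by
            refine Fin.ne_of_val_ne ?_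
            have h1 : (i : ℕ) < (j : ℕ) := h.1
            have h2 : (j : ℕ) < n - 1 := h.2
            show (i : ℕ) ≠ n - 1
            omega)
          (by
            refine Fin.ne_of_val_ne ?_
            have h2 : (j : ℕ) < n - 1 := h.2
            show (j : ℕ) ≠ n - 1
            omega)) 1
    else 0

/-! ## The induced representation of statement on `Ind_L^G σ` -/

/-- The right regular representation of a group `G` on the space of functions
`G → ℂ`, given by `(x · f)(g) = f(g x)`. -/
def regRep (G : Type*) [Group G] : Representation ℂ G (G → ℂ) where
  toFun x :=
    { toFun := fun f => fun g => f (g * x)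
      map_add' := fun f g => rfl
      map_smul' := fun c f => rfl }
  map_one' := by
    refine LinearMap.ext fun f => ?_
    funext g
    simp
  map_mul' x y := by
    refine LinearMap.ext fun f => ?_
    funext g
    simp [Module.End.mul_apply, mul_assoc]

/-- The space of functions `f : G(r,p,n) → ℂ` with `f(hg) = σ(h)·f(g)` for all
`h ∈ L(r,p,n)`, where `σ(h)` is the `(n,n)` entry of `h`. -/
def IndSig (r p n : ℕ) (hr : 0 < r) (hn : 0 < n) :
    Submodule ℂ (↥(GGroup r p n hr) → ℂ) where
  carrier := {f | ∀ h g : ↥(GGroup r p n hr),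
    ((h : GLn n) : Matrix (Fin n) (Fin n) ℂ) ∈ LSet r p n hn →
    f (h * g) = ((h : GLn n) : Matrix (Fin n) (Fin n) ℂ) (lastIdx n hn) (lastIdx n hn) * f g}
  add_mem' := by
    intro a b ha hb h g hh
    simp [ha h g hh, hb h g hh, mul_add]
  zero_mem' := by intro h g hh; simp
  smul_mem' := by
    intro c a ha h g hh
    simp [ha h g hh]
    ring

lemma IndSig_invariant (r p n : ℕ) (hr : 0 < r) (hn : 0 < n) :
    RepInvariant (regRep ↥(GGroup r p n hr)) (IndSig r p n hr hn) := by
  intro x f hf h g hh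
  show f ((h * g) * x) = _ * f (g * x)
  rw [mul_assoc]
  exact hf h (g * x) hh

/-- The natural representation of `G(r,p,n)` on `ℂ^n` by matrix-vector
multiplication. -/
def natRep (r p n : ℕ) (hr : 0 < r) : Representation ℂ ↥(GGroup r p n hr) (Fin n → ℂ) where
  toFun g := Matrix.mulVecLin ((g : GLn n) : Matrix (Fin n) (Fin n) ℂ)
  map_one' := by
    simp only [OneMemClass.coe_one, Units.val_one, Matrix.mulVecLin_one]
    rfl
  map_mul' g h := by
    simp only [Subgroup.coe_mul, Units.val_mul, Matrix.mulVecLin_mul]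
    rw [Module.End.mul_eq_comp]

/-! ## The operators `Z_{t,r}` and `Z_{t+1/2,r}` -/

/-- `S ∪ S′` as a finite subset of `Fin t ⊕ Fin t`. -/
def SSfin {t : ℕ} (S : Finset (Fin t)) : Finset (Fin t ⊕ Fin t) :=
  Finset.univ.filter fun x => Sum.elim (· ∈ S) (· ∈ S) x

/-- The set partition `b_S` with blocks `S ∪ S′` and `{l,l′}` for `l ∉ S`. -/
def bS {t : ℕ} (S : Finset (Fin t)) : SP t :=
  Setoid.ker fun x : Fin t ⊕ Fin t =>
    if x ∈ SSfin S then (none : Option (Fin t ⊕ Fin t)) else some x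

/-- The set partition `d_I` with blocks `I`, `(S ∪ S′) \ I` and `{l,l′}` for `l ∉ S`. -/
def dI {t : ℕ} (S : Finset (Fin t)) (I : Finset (Fin t ⊕ Fin t)) : SP t :=
  Setoid.ker fun x : Fin t ⊕ Fin t =>
    if x ∈ I then (Sum.inl true : Bool ⊕ (Fin t ⊕ Fin t))
    else if x ∈ SSfin S then Sum.inl false else Sum.inr x

/-- `N(I)` : the number of top-row (unprimed) elements of `I`. -/
def NIc {t : ℕ} (I : Finset (Fin t ⊕ Fin t)) : ℕ :=
  (I.filter fun x => x.isLeft = true).card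

/-- `M(I)` : the number of bottom-row (primed) elements of `I`. -/
def MIc {t : ℕ} (I : Finset (Fin t ⊕ Fin t)) : ℕ :=
  (I.filter fun x => x.isRight = true).card

/-- The operator `Z_{t,r}` on `V^{⊗t}`.  The inner sum over unordered partitions
`{I, (S∪S′)∖I}` (each counted once) is written as `1/2` times the sum over ordered
proper nonempty subsets `I` of `S ∪ S′`; these agree since `d_I = d_{(S∪S′)∖I}` and
the signs coincide. -/
def Zop (r n t : ℕ) : TP n t →ₗ[ℂ] TP n t :=
  (n.choose 2 : ℂ) • LinearMap.id +
  ∑ S ∈ (Finset.univ : Finset (Fin t)).powerset.filter (fun S => S ≠ ∅),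
    ((-1 : ℂ) ^ S.card) •
      (((n : ℂ) - 1) • phiD n t (bS S) +
        (1 / 2 : ℂ) •
          ∑ I ∈ (SSfin S).powerset.filter (fun I =>
              I ≠ ∅ ∧ I ≠ SSfin S ∧ ((NIc I : ℤ) ≡ (MIc I : ℤ) [ZMOD (r : ℤ)])),
            ((-1 : ℂ) ^ ((NIc I : ℤ) - (MIc I : ℤ))) • (phiD n t (dI S I) - phiD n t (bS S)))

/-- The operator `Z_{k+1/2,r}` on `V^{⊗(k+1)}`; as in `Zop`, but for `S` containing
`k+1` the inner sum is restricted to partitions in which `k+1` and `(k+1)′` lie in the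
same part. -/
def ZopHalf (r n k : ℕ) : TP n (k + 1) →ₗ[ℂ] TP n (k + 1) :=
  (n.choose 2 : ℂ) • LinearMap.id +
  ∑ S ∈ (Finset.univ : Finset (Fin (k + 1))).powerset.filter (fun S => S ≠ ∅),
    ((-1 : ℂ) ^ S.card) •
      (((n : ℂ) - 1) • phiD n (k + 1) (bS S) +
        (1 / 2 : ℂ) •
          ∑ I ∈ (SSfin S).powerset.filter (fun I =>
              I ≠ ∅ ∧ I ≠ SSfin S ∧ ((NIc I : ℤ) ≡ (MIc I : ℤ) [ZMOD (r : ℤ)]) ∧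
              (Fin.last k ∈ S →
                ((Sum.inl (Fin.last k) : Fin (k+1) ⊕ Fin (k+1)) ∈ I ↔
                  (Sum.inr (Fin.last k) : Fin (k+1) ⊕ Fin (k+1)) ∈ I))),
            ((-1 : ℂ) ^ ((NIc I : ℤ) - (MIc I : ℤ))) •
              (phiD n (k + 1) (dI S I) - phiD n (k + 1) (bS S)))

/-- The diagonal action of `κ_{r,n}` on `V^{⊗k}`. -/
def kappaOpFull (r n k : ℕ) : TP n k →ₗ[ℂ] TP n k :=
  (1 / (r : ℂ)) • ∑ l ∈ Finset.range r, ∑ i : Fin n, ∑ j : Fin n,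
    if i < j then tensorPow n k (zijMat n r l i j) else 0

/-- The diagonal action of `κ_{r,n-1}` on `V^{⊗(k+1)}`. -/
def kappaOpL (r n k : ℕ) : TP n (k + 1) →ₗ[ℂ] TP n (k + 1) :=
  (1 / (r : ℂ)) • ∑ l ∈ Finset.range r, ∑ i : Fin n, ∑ j : Fin n,
    if i < j ∧ (j : ℕ) < n - 1 then tensorPow n (k + 1) (zijMat n r l i j) else 0

/-- `w ⊗ v_n ∈ V^{⊗(k+1)}` for `w ∈ V^{⊗k}`. -/
def extendLast (n k : ℕ) (hn : 0 < n) (w : TP n k) : TP n (k + 1) :=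
  fun j => if j (Fin.last k) = lastIdx n hn then w (fun t => j t.castSucc) else 0

/-- `A ⊗ Id_{V^{⊗(l-j)}}` : the extension of an operator on `V^{⊗j}` to `V^{⊗l}`,
acting on the first `j` tensor factors. -/
def extendOp (n j l : ℕ) (hjl : j ≤ l) (A : TP n j →ₗ[ℂ] TP n j) :
    TP n l →ₗ[ℂ] TP n l where
  toFun f := fun u =>
    A (fun x : Fin j → Fin n =>
        f (fun t : Fin l => if h : (t : ℕ) < j then x ⟨t, h⟩ else u t))
      (fun s : Fin j => u (Fin.castLE hjl s))
  map_add' f g := by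
    funext u
    show A (fun x : Fin j → Fin n =>
        (f + g) (fun t : Fin l => if h : (t : ℕ) < j then x ⟨t, h⟩ else u t))
      (fun s : Fin j => u (Fin.castLE hjl s)) =
      A (fun x : Fin j → Fin n =>
        f (fun t : Fin l => if h : (t : ℕ) < j then x ⟨t, h⟩ else u t))
      (fun s : Fin j => u (Fin.castLE hjl s)) +
      A (fun x : Fin j → Fin n =>
        g (fun t : Fin l => if h : (t : ℕ) < j then x ⟨t, h⟩ else u t))
      (fun s : Fin j => u (Fin.castLE hjl s))
    have h : (fun x : Fin j → Fin n =>
        (f + g) (fun t : Fin l => if h : (t : ℕ) < j then x ⟨t, h⟩ else u t)) =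
      (fun x : Fin j → Fin n =>
        f (fun t : Fin l => if h : (t : ℕ) < j then x ⟨t, h⟩ else u t)) +
      (fun x : Fin j → Fin n =>
        g (fun t : Fin l => if h : (t : ℕ) < j then x ⟨t, h⟩ else u t)) := rfl
    rw [h, map_add]
    rfl
  map_smul' c f := by
    funext u
    show A (fun x : Fin j → Fin n =>
        (c • f) (fun t : Fin l => if h : (t : ℕ) < j then x ⟨t, h⟩ else u t))
      (fun s : Fin j => u (Fin.castLE hjl s)) =
      c • (A (fun x : Fin j → Fin n =>
        f (fun t : Fin l => if h : (t : ℕ) < j then x ⟨t, h⟩ else u t))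
      (fun s : Fin j => u (Fin.castLE hjl s)))
    have h : (fun x : Fin j → Fin n =>
        (c • f) (fun t : Fin l => if h : (t : ℕ) < j then x ⟨t, h⟩ else u t)) =
      c • (fun x : Fin j → Fin n =>
        f (fun t : Fin l => if h : (t : ℕ) < j then x ⟨t, h⟩ else u t)) := rfl
    rw [h, _root_.map_smul]
    rfl

/-! ## Diagram multiplication (statement of the structure constants) -/

/-- The bottom row of `d₁` matches the top row of `d₂`. -/
def rowMatch (k : ℕ) (d1 d2 : SP k) : Prop :=
  ∀ i j : Fin k, d1.r (Sum.inr i) (Sum.inr j) ↔ d2.r (Sum.inl i) (Sum.inl j)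

/-- Extend a setoid on `α` along an injection `e : α → β` by singleton classes on
the complement of the range. -/
def extendSetoid {α β : Type*} (e : α → β) (he : Function.Injective e)
    (d : Setoid α) : Setoid β where
  r x y := x = y ∨ ∃ a b, d.r a b ∧ x = e a ∧ y = e b
  iseqv := by
    constructor
    · intro x; exact Or.inl rfl
    · rintro x y (rfl | ⟨a, b, hab, rfl, rfl⟩)
      · exact Or.inl rfl
      · exact Or.inr ⟨b, a, d.iseqv.symm hab, rfl, rfl⟩
    · rintro x y z (rfl | ⟨a, b, hab, rfl, rfl⟩) h2
      · exact h2
      · rcases h2 with rfl | ⟨a', b', hab', hy, rfl⟩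
        · exact Or.inr ⟨a, b, hab, rfl, rfl⟩
        · have hba : b = a' := he hy
          exact Or.inr ⟨a, b', d.iseqv.trans hab (hba ▸ hab'), rfl, rfl⟩

/-- The three-row vertex set: top row, middle row, bottom row. -/
abbrev T3 (k : ℕ) : Type := Fin k ⊕ (Fin k ⊕ Fin k)

/-- `d₁` placed on the top and middle rows. -/
def embT (k : ℕ) : Fin k ⊕ Fin k → T3 k := Sum.map id Sum.inl

/-- `d₂` placed on the middle and bottom rows. -/
def embB (k : ℕ) : Fin k ⊕ Fin k → T3 k := Sum.inr

/-- The outer (top and bottom) rows. -/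
def embO (k : ℕ) : Fin k ⊕ Fin k → T3 k := Sum.map id Sum.inr

lemma embT_inj (k : ℕ) : Function.Injective (embT k) :=
  Function.Injective.sumMap Function.injective_id Sum.inl_injective

/-- The stacked three-row diagram : the join of `d₁` (on top∪middle) and `d₂`
(on middle∪bottom); its classes are the connected components. -/
def stacked (k : ℕ) (d1 d2 : SP k) : Setoid (T3 k) :=
  extendSetoid (embT k) (embT_inj k) d1 ⊔ extendSetoid (embB k) Sum.inr_injective d2

/-- The concatenation `d₁ ∘ d₂`, i.e. the restriction of the stacked diagram to the
outer rows. -/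
def compSetoid (k : ℕ) (d1 d2 : SP k) : SP k :=
  Setoid.comap (embO k) (stacked k d1 d2)

/-- `[d₁ ∘ d₂]` : the number of connected components of the stacked diagram contained
entirely in the middle row. -/
def midCount (k : ℕ) (d1 d2 : SP k) : ℕ :=
  Nat.card {q : Quotient (stacked k d1 d2) //
    ∀ x : T3 k, Quotient.mk (stacked k d1 d2) x = q → ∃ i : Fin k, x = Sum.inr (Sum.inl i)}

/-- A block entirely contained in the top row. -/
def topOnly {k : ℕ} (d : SP k) (q : Quotient d) : Prop :=
  ∀ x, Quotient.mk d x = q → ∃ i : Fin k, x = Sum.inl i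

/-- A block entirely contained in the bottom row. -/
def botOnly {k : ℕ} (d : SP k) (q : Quotient d) : Prop :=
  ∀ x, Quotient.mk d x = q → ∃ i : Fin k, x = Sum.inr i

/-- `x` lies in the block merged from the pair `pr = (q₁, q₂)`. -/
def memPair {k : ℕ} (d1 d2 : SP k) : Fin k ⊕ Fin k → Quotient d1 × Quotient d2 → Prop
  | Sum.inl i, pr => Quotient.mk d1 (Sum.inl i) = pr.1
  | Sum.inr i, pr => Quotient.mk d2 (Sum.inr i) = pr.2

/-- `d` is obtained from `d₁ ∘ d₂` by choosing an injective partial matching between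
the top-only blocks of `d₁` and the bottom-only blocks of `d₂` and merging each
matched pair into a single block. -/
def IsCoarsening (k : ℕ) (d1 d2 d : SP k) : Prop :=
  ∃ P : Finset (Quotient d1 × Quotient d2),
    (∀ pr ∈ P, topOnly d1 pr.1 ∧ botOnly d2 pr.2) ∧
    (∀ pr ∈ P, ∀ pr' ∈ P, pr.1 = pr'.1 → pr = pr') ∧
    (∀ pr ∈ P, ∀ pr' ∈ P, pr.2 = pr'.2 → pr = pr') ∧
    (∀ x y : Fin k ⊕ Fin k, d.r x y ↔
      ((compSetoid k d1 d2).r x y ∨ ∃ pr ∈ P, memPair d1 d2 x pr ∧ memPair d1 d2 y pr))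

/-- The (integer) falling factorial `(a)_b = a(a-1)⋯(a-b+1)`. -/
def fallingC (a : ℤ) (b : ℕ) : ℤ := ∏ i ∈ Finset.range b, (a - i)

/-! ## The elements `c₁, c₂` of `G(2,2,2k)` and the operator `M_{k,2,2}` -/

/-- The underlying function of the permutation `(1 2)(3 4)⋯(2k-1 2k)` of `Fin (2k)`:
it swaps `2t` and `2t+1` (0-indexed) for each `t < k`. -/
def pairFn (k : ℕ) : Fin (2 * k) → Fin (2 * k) := fun x =>
  if _ : (x : ℕ) % 2 = 0 then ⟨(x : ℕ) + 1, by have := x.2; omega⟩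
  else ⟨(x : ℕ) - 1, by have := x.2; omega⟩

lemma pairFn_invol (k : ℕ) : Function.Involutive (pairFn k) := by
  intro x
  unfold pairFn
  split_ifs with h1 h2 h3
  · refine Fin.ext ?_; simp only [Fin.val_mk] at h2 ⊢; omega
  · refine Fin.ext ?_; simp only [Fin.val_mk] at h2 ⊢; omega
  · refine Fin.ext ?_; simp only [Fin.val_mk] at h3 ⊢; omega
  · refine Fin.ext ?_; simp only [Fin.val_mk] at h3 ⊢; omega

/-- The permutation `(1 2)(3 4)⋯(2k-1 2k)` of `Fin (2k)`. -/
def pairPerm (k : ℕ) : Equiv.Perm (Fin (2 * k)) :=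
  Function.Involutive.toPerm (pairFn k) (pairFn_invol k)

/-- `c₂` : the permutation matrix of `(1 2)(3 4)⋯(2k-1 2k)`. -/
def c2Mat (k : ℕ) : Matrix (Fin (2 * k)) (Fin (2 * k)) ℂ :=
  monoMat (2 * k) (pairPerm k) (fun _ => 1)

/-- The diagonal matrix `diag(-1,-1,1,…,1)`. -/
def dMat (k : ℕ) : Matrix (Fin (2 * k)) (Fin (2 * k)) ℂ :=
  Matrix.diagonal fun t => if (t : ℕ) < 2 then (-1 : ℂ) else 1

/-- `c₁ = D · c₂`. -/
def c1Mat (k : ℕ) : Matrix (Fin (2 * k)) (Fin (2 * k)) ℂ := dMat k * c2Mat k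

/-- Two matrices are conjugate by an element of `G(r,p,n)`. -/
def conjIn (r p n : ℕ) (c x : Matrix (Fin n) (Fin n) ℂ) : Prop :=
  ∃ g ∈ GSet r p n, g * c = x * g

/-- The conjugacy class of `c` in `G(r,p,n)`. -/
def conjClass (r p n : ℕ) (c : Matrix (Fin n) (Fin n) ℂ) :
    Set (Matrix (Fin n) (Fin n) ℂ) :=
  {h | h ∈ GSet r p n ∧ conjIn r p n c h}

/-- The set partition of `{1,…,k,1′,…,k′}` all of whose blocks are singletons. -/
def singletonSP (k : ℕ) : SP k := ⟨Eq, eq_equivalence⟩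

/-- The operator `M_{k,2,2} = φ_k(x_{d₀})` on `(ℂ^{2k})^{⊗k}`, where `d₀` is the set
partition with all blocks singletons. -/
def Mop (k : ℕ) : TP (2 * k) k →ₗ[ℂ] TP (2 * k) k :=
  phiX (2 * k) k (singletonSP k)

/-! ## Auxiliary machinery for statement 5 -/

section Statement5Aux

variable {n t : ℕ}

/-- `w` realizes the set partition `d` exactly. -/
def exactR (w : Fin t ⊕ Fin t → Fin n) (d : SP t) : Prop :=
  ∀ a b, d.r a b ↔ w a = w b

lemma exact_of_coeX_ne {d : SP t} {w : Fin t ⊕ Fin t → Fin n}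
    (h : coeX n t d w ≠ 0) : exactR w d := by
  by_contra hc
  apply h
  unfold coeX
  exact if_neg hc

/-- number of top-row positions of `w` with value `v`. -/
def Tct (w : Fin t ⊕ Fin t → Fin n) (v : Fin n) : ℕ :=
  (Finset.univ.filter fun a : Fin t => w (Sum.inl a) = v).card

/-- number of bottom-row positions of `w` with value `v`. -/
def Bct (w : Fin t ⊕ Fin t → Fin n) (v : Fin n) : ℕ :=
  (Finset.univ.filter fun a : Fin t => w (Sum.inr a) = v).card

lemma topCt_eq {w : Fin t ⊕ Fin t → Fin n} {d : SP t} (hw : exactR w d)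
    (a : Fin t ⊕ Fin t) : topCt d (Quotient.mk d a) = Tct w (w a) := by
  unfold topCt Tct
  have e : {b : Fin t // Quotient.mk d (Sum.inl b) = Quotient.mk d a} ≃
      {b : Fin t // w (Sum.inl b) = w a} :=
    Equiv.subtypeEquivRight fun b => by rw [Quotient.eq]; exact hw _ _
  rw [Nat.card_congr e, Nat.card_eq_fintype_card, Fintype.card_subtype]

lemma botCt_eq {w : Fin t ⊕ Fin t → Fin n} {d : SP t} (hw : exactR w d)
    (a : Fin t ⊕ Fin t) : botCt d (Quotient.mk d a) = Bct w (w a) := by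
  unfold botCt Bct
  have e : {b : Fin t // Quotient.mk d (Sum.inr b) = Quotient.mk d a} ≃
      {b : Fin t // w (Sum.inr b) = w a} :=
    Equiv.subtypeEquivRight fun b => by rw [Quotient.eq]; exact hw _ _
  rw [Nat.card_congr e, Nat.card_eq_fintype_card, Fintype.card_subtype]

lemma quot_lift_inj {w : Fin t ⊕ Fin t → Fin n} {d : SP t} (hw : exactR w d) :
    Function.Injective (Quotient.lift w (fun a b h => (hw a b).1 h)) := by
  rintro ⟨a⟩ ⟨b⟩ h
  exact Quotient.sound ((hw a b).2 h)

lemma nBlocks_le_n {w : Fin t ⊕ Fin t → Fin n} {d : SP t} (hw : exactR w d) :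
    nBlocks d ≤ n := by
  have := Nat.card_le_card_of_injective _ (quot_lift_inj hw)
  simpa [nBlocks, Nat.card_eq_fintype_card] using this

lemma surj_of_nBlocks {w : Fin t ⊕ Fin t → Fin n} {d : SP t} (hw : exactR w d)
    (hb : nBlocks d = n) : Function.Surjective w := by
  have hcard : Fintype.card (Quotient d) = Fintype.card (Fin n) := by
    have h1 : Nat.card (Quotient d) = n := hb
    simpa [Nat.card_eq_fintype_card] using h1
  have hbij := (Fintype.bijective_iff_injective_and_card
    (Quotient.lift w (fun a b h => (hw a b).1 h))).2 ⟨quot_lift_inj hw, hcard⟩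
  intro v
  obtain ⟨q, hq⟩ := hbij.2 v
  obtain ⟨a, rfl⟩ := Quotient.exists_rep q
  exact ⟨a, hq⟩

lemma nBlocks_eq_of_surj {w : Fin t ⊕ Fin t → Fin n} {d : SP t} (hw : exactR w d)
    (hs : Function.Surjective w) : nBlocks d = n := by
  have hbij : Function.Bijective (Quotient.lift w (fun a b h => (hw a b).1 h)) :=
    ⟨quot_lift_inj hw, fun v => by
      obtain ⟨a, ha⟩ := hs v; exact ⟨Quotient.mk d a, ha⟩⟩
  have := Nat.card_eq_of_bijective _ hbij
  simpa [nBlocks, Nat.card_eq_fintype_card] using this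

lemma Tct_eq_zero {w : Fin t ⊕ Fin t → Fin n} {v : Fin n} (h : ∀ a, w a ≠ v) :
    Tct w v = 0 := by
  unfold Tct
  rw [Finset.card_eq_zero, Finset.filter_eq_empty_iff]
  exact fun a _ => h _

lemma Bct_eq_zero {w : Fin t ⊕ Fin t → Fin n} {v : Fin n} (h : ∀ a, w a ≠ v) :
    Bct w v = 0 := by
  unfold Bct
  rw [Finset.card_eq_zero, Finset.filter_eq_empty_iff]
  exact fun a _ => h _

lemma pi_vals {r : ℕ} {w : Fin t ⊕ Fin t → Fin n} {d : SP t} (hw : exactR w d)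
    (h : inPi r d) (v : Fin n) :
    (Tct w v : ℤ) ≡ (Bct w v : ℤ) [ZMOD (r : ℤ)] := by
  by_cases hv : ∃ a, w a = v
  · obtain ⟨a, rfl⟩ := hv
    rw [← topCt_eq hw a, ← botCt_eq hw a]
    exact h _
  · push_neg at hv
    rw [Tct_eq_zero hv, Bct_eq_zero hv]

lemma lambda_vals {r p : ℕ} {w : Fin t ⊕ Fin t → Fin n} {d : SP t} (hw : exactR w d)
    (h : inLambda r p n d) :
    Function.Surjective w ∧
    (∀ v, ((Tct w v : ℤ) ≡ (Bct w v : ℤ) [ZMOD ((r / p : ℕ) : ℤ)]) ∧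
      ¬ ((Tct w v : ℤ) ≡ (Bct w v : ℤ) [ZMOD (r : ℤ)])) ∧
    (∀ v v', (Tct w v : ℤ) - (Bct w v : ℤ) ≡ (Tct w v' : ℤ) - (Bct w v' : ℤ)
      [ZMOD (r : ℤ)]) := by
  have hs := surj_of_nBlocks hw h.1
  refine ⟨hs, fun v => ?_, fun v v' => ?_⟩
  · obtain ⟨a, rfl⟩ := hs v
    rw [← topCt_eq hw a, ← botCt_eq hw a]
    exact h.2.1 _
  · obtain ⟨a, rfl⟩ := hs v
    obtain ⟨a', rfl⟩ := hs v'
    rw [← topCt_eq hw a, ← botCt_eq hw a, ← topCt_eq hw a', ← botCt_eq hw a']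
    exact h.2.2 _ _

lemma exact_ker (x : Fin t ⊕ Fin t → Fin n) : exactR x (Setoid.ker x) :=
  fun _ _ => Iff.rfl

lemma inPi_of_vals {r : ℕ} {x : Fin t ⊕ Fin t → Fin n}
    (h : ∀ v, (Tct x v : ℤ) ≡ (Bct x v : ℤ) [ZMOD (r : ℤ)]) :
    inPi r (Setoid.ker x) := by
  intro q
  obtain ⟨a, rfl⟩ := Quotient.exists_rep q
  rw [topCt_eq (exact_ker x) a, botCt_eq (exact_ker x) a]
  exact h _

lemma inLambda_of_vals {r p : ℕ} {x : Fin t ⊕ Fin t → Fin n}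
    (hs : Function.Surjective x)
    (h1 : ∀ v, ((Tct x v : ℤ) ≡ (Bct x v : ℤ) [ZMOD ((r / p : ℕ) : ℤ)]) ∧
      ¬ ((Tct x v : ℤ) ≡ (Bct x v : ℤ) [ZMOD (r : ℤ)]))
    (h2 : ∀ v v', (Tct x v : ℤ) - (Bct x v : ℤ) ≡ (Tct x v' : ℤ) - (Bct x v' : ℤ)
      [ZMOD (r : ℤ)]) :
    inLambda r p n (Setoid.ker x) := by
  refine ⟨nBlocks_eq_of_surj (exact_ker x) hs, fun q => ?_, fun q q' => ?_⟩
  · obtain ⟨a, rfl⟩ := Quotient.exists_rep q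
    rw [topCt_eq (exact_ker x) a, botCt_eq (exact_ker x) a]
    exact h1 _
  · obtain ⟨a, rfl⟩ := Quotient.exists_rep q
    obtain ⟨a', rfl⟩ := Quotient.exists_rep q'
    rw [topCt_eq (exact_ker x) a, botCt_eq (exact_ker x) a,
      topCt_eq (exact_ker x) a', botCt_eq (exact_ker x) a']
    exact h2 _ _

end Statement5Aux

section Statement5Aux2

variable {n t : ℕ}

lemma exists_perm {x y : Fin t ⊕ Fin t → Fin n}
    (hxy : ∀ a b, x a = x b ↔ y a = y b) :
    ∃ σ : Equiv.Perm (Fin n), ∀ a, σ (x a) = y a := by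
  classical
  let f : {v // v ∈ Set.range x} → {v // v ∈ Set.range y} :=
    fun v => ⟨y v.2.choose, Set.mem_range_self _⟩
  have hfval : ∀ v : {v // v ∈ Set.range x}, x v.2.choose = v.1 :=
    fun v => v.2.choose_spec
  have hbij : Function.Bijective f := by
    constructor
    · intro v w h
      have h1 : y v.2.choose = y w.2.choose := congrArg Subtype.val h
      have h2 : x v.2.choose = x w.2.choose := (hxy _ _).2 h1
      exact Subtype.ext ((hfval v).symm.trans (h2.trans (hfval w)))
    · rintro ⟨u, hu⟩
      refine ⟨⟨x hu.choose, Set.mem_range_self _⟩, Subtype.ext ?_⟩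
      show y (Set.mem_range_self (f := x) hu.choose).choose = u
      have h1 : x (Set.mem_range_self (f := x) hu.choose).choose = x hu.choose :=
        (Set.mem_range_self (f := x) hu.choose).choose_spec
      have h2 := (hxy _ _).1 h1
      rw [h2, hu.choose_spec]
  refine ⟨Equiv.extendSubtype (Equiv.ofBijective f hbij), fun a => ?_⟩
  have hmem : x a ∈ Set.range x := Set.mem_range_self a
  rw [Equiv.extendSubtype_apply_of_mem _ (x a) hmem]
  show y (hmem.choose) = y a
  exact (hxy _ _).1 hmem.choose_spec

lemma coeX_comp_perm (d : SP t) (σ : Equiv.Perm (Fin n))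
    (w : Fin t ⊕ Fin t → Fin n) :
    coeX n t d (fun a => σ (w a)) = coeX n t d w := by
  unfold coeX
  simp only [EmbeddingLike.apply_eq_iff_eq]

lemma Phi_inv (d1 d2 : SP t) {x y : Fin t ⊕ Fin t → Fin n}
    (hxy : ∀ a b, x a = x b ↔ y a = y b) :
    ∑ mm : Fin t → Fin n,
        coeX n t d1 (Sum.elim mm (x ∘ Sum.inr)) *
          coeX n t d2 (Sum.elim (x ∘ Sum.inl) mm)
      = ∑ mm : Fin t → Fin n,
        coeX n t d1 (Sum.elim mm (y ∘ Sum.inr)) *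
          coeX n t d2 (Sum.elim (y ∘ Sum.inl) mm) := by
  obtain ⟨σ, hσ⟩ := exists_perm hxy
  refine Fintype.sum_equiv (Equiv.piCongrRight fun _ : Fin t => σ) _ _ fun mm => ?_
  have h1 : (fun a => σ (Sum.elim mm (x ∘ Sum.inr) a)) =
      Sum.elim (fun a => σ (mm a)) (y ∘ Sum.inr) := by
    funext a
    cases a with
    | inl a => rfl
    | inr a => exact hσ _
  have h2 : (fun a => σ (Sum.elim (x ∘ Sum.inl) mm a)) =
      Sum.elim (y ∘ Sum.inl) (fun a => σ (mm a)) := by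
    funext a
    cases a with
    | inl a => exact hσ _
    | inr a => rfl
  rw [← coeX_comp_perm d1 σ (Sum.elim mm (x ∘ Sum.inr)),
    ← coeX_comp_perm d2 σ (Sum.elim (x ∘ Sum.inl) mm), h1, h2]
  rfl

lemma kernelMap_comp (K1 K2 : (Fin t → Fin n) → (Fin t → Fin n) → ℂ) :
    kernelMap n t K1 ∘ₗ kernelMap n t K2 =
      kernelMap n t fun o i => ∑ mm : Fin t → Fin n, K1 o mm * K2 mm i := by
  apply LinearMap.ext
  intro f
  funext o
  show ∑ mm, K1 o mm * (∑ i, K2 mm i * f i) = ∑ i, (∑ mm, K1 o mm * K2 mm i) * f i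
  simp only [Finset.mul_sum, Finset.sum_mul]
  rw [Finset.sum_comm]
  exact Finset.sum_congr rfl fun i _ => Finset.sum_congr rfl fun mm _ => by ring

set_option maxHeartbeats 1000000 in
lemma phiX_comp_mem (P : SP t → Prop) (d1 d2 : SP t)
    (hsupp : ∀ (x : Fin t ⊕ Fin t → Fin n) (mm : Fin t → Fin n),
      exactR (Sum.elim mm (x ∘ Sum.inr)) d1 →
      exactR (Sum.elim (x ∘ Sum.inl) mm) d2 → P (Setoid.ker x)) :
    phiX n t d1 ∘ₗ phiX n t d2 ∈
      Submodule.span ℂ {T : TP n t →ₗ[ℂ] TP n t | ∃ d, P d ∧ T = phiX n t d} := by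
  classical
  set Φ : (Fin t ⊕ Fin t → Fin n) → ℂ := fun x =>
    ∑ mm : Fin t → Fin n,
      coeX n t d1 (Sum.elim mm (x ∘ Sum.inr)) *
        coeX n t d2 (Sum.elim (x ∘ Sum.inl) mm) with hΦ
  have hcomp : phiX n t d1 ∘ₗ phiX n t d2 =
      kernelMap n t (fun o i => Φ (Sum.elim i o)) := by
    rw [phiX, phiX, kernelMap_comp]
    congr 1
  set cnt : (Fin t ⊕ Fin t → Fin n) → ℕ := fun x =>
    (Finset.univ.filter fun c : Fin t ⊕ Fin t → Fin n =>
      ∀ a b, c a = c b ↔ x a = x b).card with hcnt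
  have hcnt_ne : ∀ x, (cnt x : ℂ) ≠ 0 := by
    intro x
    have : 0 < cnt x := Finset.card_pos.mpr ⟨x, by simp⟩
    exact_mod_cast this.ne'
  have hco : ∀ (c x : Fin t ⊕ Fin t → Fin n),
      coeX n t (Setoid.ker c) x =
        if (∀ a b, c a = c b ↔ x a = x b) then 1 else 0 := by
    intro c x
    unfold coeX
    exact if_congr Iff.rfl rfl rfl
  have hkey : ∀ x, Φ x = ∑ c : Fin t ⊕ Fin t → Fin n,
      Φ c / (cnt c : ℂ) * coeX n t (Setoid.ker c) x := by
    intro x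
    have step1 : ∀ c : Fin t ⊕ Fin t → Fin n,
        Φ c / (cnt c : ℂ) * coeX n t (Setoid.ker c) x =
          if (∀ a b, c a = c b ↔ x a = x b) then Φ c / (cnt c : ℂ) else 0 := by
      intro c
      rw [hco c x]
      split_ifs <;> simp
    rw [Finset.sum_congr rfl fun c _ => step1 c, ← Finset.sum_filter]
    have step2 : ∀ c ∈ Finset.univ.filter
        (fun c : Fin t ⊕ Fin t → Fin n => ∀ a b, c a = c b ↔ x a = x b),
        Φ c / (cnt c : ℂ) = Φ x / (cnt x : ℂ) := by
      intro c hc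
      have h := (Finset.mem_filter.mp hc).2
      have hΦeq : Φ c = Φ x := Phi_inv d1 d2 h
      have hcnteq : cnt c = cnt x := by
        simp only [hcnt]
        congr 1
        apply Finset.filter_congr
        intro c' _
        constructor
        · intro h' a b
          exact (h' a b).trans (h a b)
        · intro h' a b
          exact (h' a b).trans (h a b).symm
      rw [hΦeq, hcnteq]
    rw [Finset.sum_congr rfl step2, Finset.sum_const]
    have hcard : (Finset.univ.filter
        (fun c : Fin t ⊕ Fin t → Fin n => ∀ a b, c a = c b ↔ x a = x b)).card = cnt x := rfl
    rw [hcard, nsmul_eq_mul]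
    rw [mul_div_assoc', mul_comm, mul_div_assoc, div_self (hcnt_ne x), mul_one]
  have hop : kernelMap n t (fun o i => Φ (Sum.elim i o)) =
      ∑ c : Fin t ⊕ Fin t → Fin n, (Φ c / (cnt c : ℂ)) • phiX n t (Setoid.ker c) := by
    apply LinearMap.ext
    intro f
    funext o
    have hL : (kernelMap n t (fun o i => Φ (Sum.elim i o))) f o =
        ∑ i, Φ (Sum.elim i o) * f i := rfl
    have hR : (∑ c : Fin t ⊕ Fin t → Fin n,
          (Φ c / (cnt c : ℂ)) • phiX n t (Setoid.ker c)) f o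
        = ∑ c : Fin t ⊕ Fin t → Fin n, (Φ c / (cnt c : ℂ)) *
            ∑ i, coeX n t (Setoid.ker c) (Sum.elim i o) * f i := by
      rw [LinearMap.sum_apply, Finset.sum_apply]
      exact Finset.sum_congr rfl fun c _ => rfl
    rw [hL, hR]
    simp only [Finset.mul_sum]
    rw [Finset.sum_comm]
    refine Finset.sum_congr rfl fun i _ => ?_
    rw [hkey (Sum.elim i o), Finset.sum_mul]
    exact Finset.sum_congr rfl fun c _ => (mul_assoc _ _ _)
  rw [hcomp, hop]
  refine Submodule.sum_mem _ fun c _ => ?_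
  by_cases hc : Φ c = 0
  · rw [hc]
    simp
  · refine Submodule.smul_mem _ _ (Submodule.subset_span ?_)
    obtain ⟨mm, hmm⟩ : ∃ mm : Fin t → Fin n,
        coeX n t d1 (Sum.elim mm (c ∘ Sum.inr)) *
          coeX n t d2 (Sum.elim (c ∘ Sum.inl) mm) ≠ 0 := by
      by_contra hAll
      push_neg at hAll
      exact hc (by rw [hΦ]; exact Finset.sum_eq_zero fun mm _ => hAll mm)
    have hZ1 : exactR (Sum.elim mm (c ∘ Sum.inr)) d1 :=
      exact_of_coeX_ne (left_ne_zero_of_mul hmm)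
    have hZ2 : exactR (Sum.elim (c ∘ Sum.inl) mm) d2 :=
      exact_of_coeX_ne (right_ne_zero_of_mul hmm)
    exact ⟨_, hsupp c mm hZ1 hZ2, rfl⟩

end Statement5Aux2

section Statement5Aux3

variable {n : ℕ}

lemma support_main {r p k : ℕ} (hn : 0 < n) (hpr : p ∣ r)
    {d1 d2 : SP (k + 1)} (h1 : inA r p n d1 ∧ isHalf k d1)
    (h2 : inA r p n d2 ∧ isHalf k d2)
    (x : Fin (k + 1) ⊕ Fin (k + 1) → Fin n) (mm : Fin (k + 1) → Fin n)
    (e1 : exactR (Sum.elim mm (x ∘ Sum.inr)) d1)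
    (e2 : exactR (Sum.elim (x ∘ Sum.inl) mm) d2) :
    inA r p n (Setoid.ker x) ∧ isHalf k (Setoid.ker x) := by
  have hdvd : ((r / p : ℕ) : ℤ) ∣ (r : ℤ) :=
    Int.natCast_dvd_natCast.mpr (Nat.div_dvd_of_dvd hpr)
  have hhalf : isHalf k (Setoid.ker x) := by
    have hx2 : x (Sum.inl (Fin.last k)) = mm (Fin.last k) := (e2 _ _).1 h2.2
    have hx1 : mm (Fin.last k) = x (Sum.inr (Fin.last k)) := (e1 _ _).1 h1.2
    exact hx2.trans hx1
  refine ⟨?_, hhalf⟩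
  set w1 := Sum.elim mm (x ∘ Sum.inr) with hw1def
  have hA1 : inPi r d1 ∨ inLambda r p n d1 := by
    rcases h1.1 with h | h | h
    · exact Or.inl h
    · exact Or.inr h
    · exact absurd h.1 (not_lt.mpr (nBlocks_le_n e1))
  have hA2 : inPi r d2 ∨ inLambda r p n d2 := by
    rcases h2.1 with h | h | h
    · exact Or.inl h
    · exact Or.inr h
    · exact absurd h.1 (not_lt.mpr (nBlocks_le_n e2))
  rcases hA2 with hp2 | hl2
  · rcases hA1 with hp1 | hl1
    · -- Π ∘ Π
      left
      apply inPi_of_vals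
      intro v
      have hA : (Tct x v : ℤ) ≡ (Tct w1 v : ℤ) [ZMOD (r : ℤ)] := pi_vals e2 hp2 v
      have hB : (Tct w1 v : ℤ) ≡ (Bct x v : ℤ) [ZMOD (r : ℤ)] := pi_vals e1 hp1 v
      exact hA.trans hB
    · -- Π (top) ∘ Λ (bottom)
      obtain ⟨hs1, hmod1, hconst1⟩ := lambda_vals e1 hl1
      have hmod1' : ∀ v, ((Tct w1 v : ℤ) ≡ (Bct x v : ℤ) [ZMOD ((r / p : ℕ) : ℤ)]) ∧
          ¬ ((Tct w1 v : ℤ) ≡ (Bct x v : ℤ) [ZMOD (r : ℤ)]) := hmod1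
      have hconst1' : ∀ v v', (Tct w1 v : ℤ) - (Bct x v : ℤ) ≡
          (Tct w1 v' : ℤ) - (Bct x v' : ℤ) [ZMOD (r : ℤ)] := hconst1
      have hpi2 : ∀ v, (Tct x v : ℤ) ≡ (Tct w1 v : ℤ) [ZMOD (r : ℤ)] :=
        fun v => pi_vals e2 hp2 v
      have hsx : Function.Surjective x := by
        intro v
        by_contra hv
        push_neg at hv
        have hT0 : Tct x v = 0 := Tct_eq_zero hv
        have hB0 : Bct x v = 0 := Bct_eq_zero hv
        apply (hmod1' v).2
        have h1' : (Tct w1 v : ℤ) ≡ 0 [ZMOD (r : ℤ)] := by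
          have := (hpi2 v).symm
          rwa [hT0, Nat.cast_zero] at this
        rw [hB0, Nat.cast_zero]
        exact h1'
      right; left
      apply inLambda_of_vals hsx
      · intro v
        refine ⟨((hpi2 v).of_dvd hdvd).trans (hmod1' v).1, fun hcon => ?_⟩
        exact (hmod1' v).2 ((hpi2 v).symm.trans hcon)
      · intro v v'
        have h := hconst1' v v'
        have eA : (Tct x v : ℤ) - (Bct x v : ℤ) ≡
            (Tct w1 v : ℤ) - (Bct x v : ℤ) [ZMOD (r : ℤ)] :=
          Int.ModEq.sub (hpi2 v) (Int.ModEq.refl _)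
        have eB : (Tct w1 v' : ℤ) - (Bct x v' : ℤ) ≡
            (Tct x v' : ℤ) - (Bct x v' : ℤ) [ZMOD (r : ℤ)] :=
          Int.ModEq.sub (hpi2 v').symm (Int.ModEq.refl _)
        exact eA.trans (h.trans eB)
  · rcases hA1 with hp1 | hl1
    · -- Λ (top) ∘ Π (bottom)
      obtain ⟨hs2, hmod2, hconst2⟩ := lambda_vals e2 hl2
      have hmod2' : ∀ v, ((Tct x v : ℤ) ≡ (Tct w1 v : ℤ) [ZMOD ((r / p : ℕ) : ℤ)]) ∧
          ¬ ((Tct x v : ℤ) ≡ (Tct w1 v : ℤ) [ZMOD (r : ℤ)]) := hmod2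
      have hconst2' : ∀ v v', (Tct x v : ℤ) - (Tct w1 v : ℤ) ≡
          (Tct x v' : ℤ) - (Tct w1 v' : ℤ) [ZMOD (r : ℤ)] := hconst2
      have hpi1 : ∀ v, (Tct w1 v : ℤ) ≡ (Bct x v : ℤ) [ZMOD (r : ℤ)] :=
        fun v => pi_vals e1 hp1 v
      have hsx : Function.Surjective x := by
        intro v
        by_contra hv
        push_neg at hv
        have hT0 : Tct x v = 0 := Tct_eq_zero hv
        have hB0 : Bct x v = 0 := Bct_eq_zero hv
        apply (hmod2' v).2
        have h1' : (Tct w1 v : ℤ) ≡ 0 [ZMOD (r : ℤ)] := by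
          have := hpi1 v
          rwa [hB0, Nat.cast_zero] at this
        rw [hT0, Nat.cast_zero]
        exact h1'.symm
      right; left
      apply inLambda_of_vals hsx
      · intro v
        refine ⟨(hmod2' v).1.trans ((hpi1 v).of_dvd hdvd), fun hcon => ?_⟩
        exact (hmod2' v).2 (hcon.trans (hpi1 v).symm)
      · intro v v'
        have h := hconst2' v v'
        have eA : (Tct x v : ℤ) - (Bct x v : ℤ) ≡
            (Tct x v : ℤ) - (Tct w1 v : ℤ) [ZMOD (r : ℤ)] :=
          Int.ModEq.sub (Int.ModEq.refl _) (hpi1 v).symm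
        have eB : (Tct x v' : ℤ) - (Tct w1 v' : ℤ) ≡
            (Tct x v' : ℤ) - (Bct x v' : ℤ) [ZMOD (r : ℤ)] :=
          Int.ModEq.sub (Int.ModEq.refl _) (hpi1 v')
        exact eA.trans (h.trans eB)
    · -- Λ ∘ Λ
      obtain ⟨hs2, hmod2, hconst2⟩ := lambda_vals e2 hl2
      obtain ⟨hs1, hmod1, hconst1⟩ := lambda_vals e1 hl1
      have hmod2' : ∀ v, ((Tct x v : ℤ) ≡ (Tct w1 v : ℤ) [ZMOD ((r / p : ℕ) : ℤ)]) ∧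
          ¬ ((Tct x v : ℤ) ≡ (Tct w1 v : ℤ) [ZMOD (r : ℤ)]) := hmod2
      have hconst2' : ∀ v v', (Tct x v : ℤ) - (Tct w1 v : ℤ) ≡
          (Tct x v' : ℤ) - (Tct w1 v' : ℤ) [ZMOD (r : ℤ)] := hconst2
      have hmod1' : ∀ v, ((Tct w1 v : ℤ) ≡ (Bct x v : ℤ) [ZMOD ((r / p : ℕ) : ℤ)]) ∧
          ¬ ((Tct w1 v : ℤ) ≡ (Bct x v : ℤ) [ZMOD (r : ℤ)]) := hmod1
      have hconst1' : ∀ v v', (Tct w1 v : ℤ) - (Bct x v : ℤ) ≡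
          (Tct w1 v' : ℤ) - (Bct x v' : ℤ) [ZMOD (r : ℤ)] := hconst1
      set v0 : Fin n := ⟨0, hn⟩ with hv0
      have hall : ∀ v, (Tct x v : ℤ) - (Bct x v : ℤ) ≡
          (Tct x v0 : ℤ) - (Bct x v0 : ℤ) [ZMOD (r : ℤ)] := by
        intro v
        have hC := (hconst2' v v0).add (hconst1' v v0)
        have hE1 : (Tct x v : ℤ) - (Bct x v : ℤ) =
            ((Tct x v : ℤ) - (Tct w1 v : ℤ)) + ((Tct w1 v : ℤ) - (Bct x v : ℤ)) := by ring
        have hE2 : (Tct x v0 : ℤ) - (Bct x v0 : ℤ) =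
            ((Tct x v0 : ℤ) - (Tct w1 v0 : ℤ)) + ((Tct w1 v0 : ℤ) - (Bct x v0 : ℤ)) := by ring
        rw [hE1, hE2]
        exact hC
      by_cases hz : (Tct x v0 : ℤ) - (Bct x v0 : ℤ) ≡ 0 [ZMOD (r : ℤ)]
      · left
        apply inPi_of_vals
        intro v
        have hd : (r : ℤ) ∣ (Tct x v : ℤ) - (Bct x v : ℤ) :=
          Int.modEq_zero_iff_dvd.mp ((hall v).trans hz)
        exact (Int.modEq_iff_dvd.mpr hd).symm
      · have hsx : Function.Surjective x := by
          intro v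
          by_contra hv
          push_neg at hv
          have hT0 : Tct x v = 0 := Tct_eq_zero hv
          have hB0 : Bct x v = 0 := Bct_eq_zero hv
          apply hz
          have h' := (hall v).symm
          rw [hT0, hB0, Nat.cast_zero, sub_zero] at h'
          exact h'
        right; left
        apply inLambda_of_vals hsx
        · intro v
          refine ⟨(hmod2' v).1.trans (hmod1' v).1, fun hcon => ?_⟩
          apply hz
          have hsub := Int.ModEq.sub hcon (Int.ModEq.refl (Bct x v : ℤ))
          rw [sub_self] at hsub
          exact ((hall v).symm).trans hsub
        · intro v v'
          exact (hall v).trans (hall v').symm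

end Statement5Aux3

/-- The span of `{φ_{k+1}(x_d) : d ∈ A_{k+1/2}(r,p,n)}` in
`End(V^{⊗(k+1)})` is closed under composition. -/
theorem statement5 (r p n k : ℕ) (hr : 0 < r) (hp : 0 < p) (hn : 0 < n) (hpr : p ∣ r) :
    ∀ F ∈ Submodule.span ℂ (TanSetHalf r p n k),
      ∀ G ∈ Submodule.span ℂ (TanSetHalf r p n k),
        F ∘ₗ G ∈ Submodule.span ℂ (TanSetHalf r p n k) := by
  have hgen : ∀ F ∈ TanSetHalf r p n k, ∀ G ∈ TanSetHalf r p n k,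
      F ∘ₗ G ∈ Submodule.span ℂ (TanSetHalf r p n k) := by
    rintro F ⟨d1, hd1, rfl⟩ G ⟨d2, hd2, rfl⟩
    exact phiX_comp_mem (fun d => inA r p n d ∧ isHalf k d) d1 d2
      (fun x mm hZ1 hZ2 => support_main hn hpr hd1 hd2 x mm hZ1 hZ2)
  intro F hF G hG
  have step1 : ∀ F' ∈ TanSetHalf r p n k,
      F' ∘ₗ G ∈ Submodule.span ℂ (TanSetHalf r p n k) := by
    intro F' hF'
    have hle : Submodule.span ℂ (TanSetHalf r p n k) ≤
        (Submodule.span ℂ (TanSetHalf r p n k)).comap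
          (LinearMap.llcomp ℂ (TP n (k + 1)) (TP n (k + 1)) (TP n (k + 1)) F') :=
      Submodule.span_le.mpr fun G' hG' =>
        Submodule.mem_comap.mpr (hgen F' hF' G' hG')
    exact Submodule.mem_comap.mp (hle hG)
  have hle2 : Submodule.span ℂ (TanSetHalf r p n k) ≤
      (Submodule.span ℂ (TanSetHalf r p n k)).comap
        ((LinearMap.llcomp ℂ (TP n (k + 1)) (TP n (k + 1)) (TP n (k + 1))).flip G) :=
    Submodule.span_le.mpr fun F' hF' =>
      Submodule.mem_comap.mpr (step1 F' hF')
  exact Submodule.mem_comap.mp (hle2 hF)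

end Tanabe
end
end

section
/- Let k be a positive integer and set n = 2k. Then M_{k,2,2} commutes with the diagonal action of G(2,2,2k) on V^{⊗k} (i.e., M_{k,2,2} ∘ g^{⊗k} = g^{⊗k} ∘ M_{k,2,2} for all g ∈ G(2,2,2k)) and M_{k,2,2} commutes with every endomorphism of V^{⊗k} that commutes with this diagonal action; in other words, M_{k,2,2} is a central element of the centralizer algebra End_{G(2,2,2k)}(V^{⊗k}). -/
open scoped Classical
open Matrix

noncomputable section

namespace Tanabe

/-! ### Auxiliary machinery for Statement 18 -/

section Statement18Aux

/-- Indicator (basis) tensor. -/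
def s18delta (n k : ℕ) (i : Fin k → Fin n) : TP n k := fun u => if u = i then 1 else 0

lemma s18_kernelMap_apply (n k : ℕ) (K : (Fin k → Fin n) → (Fin k → Fin n) → ℂ)
    (f : TP n k) (o : Fin k → Fin n) :
    kernelMap n k K f o = ∑ i, K o i * f i := rfl

lemma s18_kernelMap_congr {n k : ℕ} {K1 K2 : (Fin k → Fin n) → (Fin k → Fin n) → ℂ}
    (h : ∀ o i, K1 o i = K2 o i) : kernelMap n k K1 = kernelMap n k K2 := by
  have : K1 = K2 := funext fun o => funext fun i => h o i
  rw [this]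

lemma s18_eq_kernelMap (n k : ℕ) (F : TP n k →ₗ[ℂ] TP n k) :
    F = kernelMap n k (fun o i => F (s18delta n k i) o) := by
  apply LinearMap.ext; intro f
  funext o
  rw [s18_kernelMap_apply]
  have hf : f = ∑ i : Fin k → Fin n, f i • s18delta n k i := by
    funext u
    rw [Finset.sum_apply]
    simp only [Pi.smul_apply, s18delta, smul_eq_mul, mul_ite, mul_one, mul_zero]
    rw [Finset.sum_ite_eq Finset.univ u f]
    simp
  conv_lhs => rw [hf]
  rw [map_sum, Finset.sum_apply]
  apply Finset.sum_congr rfl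
  intro i _
  simp only [LinearMap.map_smul, Pi.smul_apply, smul_eq_mul]
  ring

lemma s18_kernelMap_comp (n k : ℕ) (K1 K2 : (Fin k → Fin n) → (Fin k → Fin n) → ℂ) :
    kernelMap n k K1 ∘ₗ kernelMap n k K2 =
      kernelMap n k (fun o j => ∑ i, K1 o i * K2 i j) := by
  apply LinearMap.ext; intro f
  funext o
  rw [LinearMap.comp_apply]
  simp only [s18_kernelMap_apply]
  simp only [Finset.mul_sum, Finset.sum_mul, mul_assoc]
  exact Finset.sum_comm

lemma s18_kernelMap_inj {n k : ℕ} {K1 K2 : (Fin k → Fin n) → (Fin k → Fin n) → ℂ}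
    (h : kernelMap n k K1 = kernelMap n k K2) (o j : Fin k → Fin n) : K1 o j = K2 o j := by
  have h2 : kernelMap n k K1 (s18delta n k j) o = kernelMap n k K2 (s18delta n k j) o := by
    rw [h]
  simp only [s18_kernelMap_apply, s18delta, mul_ite, mul_one, mul_zero,
    Finset.sum_ite_eq' Finset.univ, Finset.mem_univ, if_true] at h2
  exact h2

lemma s18_comm_kernel {n k : ℕ} {K T : (Fin k → Fin n) → (Fin k → Fin n) → ℂ}
    (h : kernelMap n k K ∘ₗ kernelMap n k T = kernelMap n k T ∘ₗ kernelMap n k K)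
    (o j : Fin k → Fin n) :
    ∑ i, K o i * T i j = ∑ i, T o i * K i j := by
  rw [s18_kernelMap_comp, s18_kernelMap_comp] at h
  exact s18_kernelMap_inj h o j

lemma s18_coeX_singleton (n k : ℕ) (c : Fin k ⊕ Fin k → Fin n) :
    coeX n k (singletonSP k) c = if Function.Injective c then 1 else 0 := by
  unfold coeX
  have hcond : (∀ a b : Fin k ⊕ Fin k, (singletonSP k).r a b ↔ c a = c b)
      ↔ Function.Injective c := by
    constructor
    · intro hc a b hab
      exact (hc a b).2 hab
    · intro hinj a b
      constructor
      · intro hr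
        have hab : a = b := hr
        rw [hab]
      · intro e
        exact hinj e
  rw [if_congr hcond rfl rfl]

lemma s18_Mop_eq (k : ℕ) :
    Mop k = kernelMap (2*k) k
      (fun o i => if Function.Injective (Sum.elim i o) then (1:ℂ) else 0) := by
  unfold Mop phiX
  exact s18_kernelMap_congr (fun o i => s18_coeX_singleton (2*k) k (Sum.elim i o))

lemma s18_prod_ite_eq_fun {k n : ℕ} (u v : Fin k → Fin n) (f : Fin k → ℂ) :
    (∏ t, if u t = v t then f t else 0) = if u = v then ∏ t, f t else 0 := by
  by_cases h : u = v
  · subst h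
    simp
  · rw [if_neg h]
    obtain ⟨t0, ht0⟩ := Function.ne_iff.1 h
    exact Finset.prod_eq_zero (Finset.mem_univ t0) (if_neg ht0)

/-- number of occurrences of the value `x` in the tuple `u` -/
abbrev s18cnt (n k : ℕ) (u : Fin k → Fin n) (x : Fin n) : ℕ :=
  (Finset.univ.filter fun t => u t = x).card

/-- parity sign of the number of occurrences -/
def s18sgn (n k : ℕ) (u : Fin k → Fin n) (x : Fin n) : ℂ := (-1) ^ s18cnt n k u x

lemma s18sgn_mul_self (n k : ℕ) (u : Fin k → Fin n) (x : Fin n) :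
    s18sgn n k u x * s18sgn n k u x = 1 := by
  unfold s18sgn
  rw [← pow_add]
  exact Even.neg_one_pow ⟨s18cnt n k u x, rfl⟩

lemma s18_cnt_sum {n k : ℕ} (u : Fin k → Fin n) : ∑ x, s18cnt n k u x = k := by
  have h := Finset.card_eq_sum_card_fiberwise
    (f := u) (s := Finset.univ) (t := Finset.univ) (fun x _ => Finset.mem_univ (u x))
  simpa using h.symm

lemma s18_cnt_inj {n k : ℕ} {u : Fin k → Fin n} (hu : Function.Injective u) (x : Fin n) :
    s18cnt n k u x = if ∃ s, u s = x then 1 else 0 := by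
  by_cases h : ∃ s, u s = x
  · obtain ⟨s, hs⟩ := h
    rw [if_pos ⟨s, hs⟩]
    have hset : Finset.univ.filter (fun t => u t = x) = {s} := by
      ext t
      simp only [Finset.mem_filter, Finset.mem_univ, true_and, Finset.mem_singleton]
      constructor
      · intro ht; exact hu (ht.trans hs.symm)
      · rintro rfl; exact hs
    show (Finset.univ.filter fun t => u t = x).card = 1
    rw [hset, Finset.card_singleton]
  · rw [if_neg h]
    have hset : Finset.univ.filter (fun t => u t = x) = ∅ := by
      ext t
      simp only [Finset.mem_filter, Finset.mem_univ, true_and, Finset.notMem_empty, iff_false]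
      exact fun ht => h ⟨t, ht⟩
    show (Finset.univ.filter fun t => u t = x).card = 0
    rw [hset, Finset.card_empty]

/-- the sign vector which is `-1` at `x` and `y` and `1` elsewhere -/
def s18aSwap (n : ℕ) (x y : Fin n) : Fin n → ℂ :=
  fun t => if t = x then -1 else if t = y then -1 else 1

lemma s18aSwap_sq (n : ℕ) (x y t : Fin n) : s18aSwap n x y t ^ 2 = 1 := by
  unfold s18aSwap
  split_ifs <;> norm_num

lemma s18aSwap_prod {n : ℕ} {x y : Fin n} (hxy : x ≠ y) :
    (∏ t, s18aSwap n x y t) = 1 := by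
  have hfun : ∀ t, s18aSwap n x y t
      = (if t = x then (-1:ℂ) else 1) * (if t = y then (-1:ℂ) else 1) := by
    intro t
    by_cases h1 : t = x <;> by_cases h2 : t = y
    · exact absurd (h1.symm.trans h2) hxy
    · simp [s18aSwap, h1, h2, hxy, Ne.symm hxy]
    · simp [s18aSwap, h1, h2, hxy, Ne.symm hxy]
    · simp [s18aSwap, h1, h2, hxy, Ne.symm hxy]
  rw [Finset.prod_congr rfl (fun t _ => hfun t), Finset.prod_mul_distrib,
    Finset.prod_ite_eq' Finset.univ x, Finset.prod_ite_eq' Finset.univ y]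
  simp

lemma s18_prod_aSwap_comp {n k : ℕ} {x y : Fin n} (hxy : x ≠ y) (u : Fin k → Fin n) :
    (∏ t, s18aSwap n x y (u t)) = s18sgn n k u x * s18sgn n k u y := by
  have hfun : ∀ t, s18aSwap n x y (u t)
      = (if u t = x then (-1:ℂ) else 1) * (if u t = y then (-1:ℂ) else 1) := by
    intro t
    by_cases h1 : u t = x <;> by_cases h2 : u t = y
    · exact absurd (h1.symm.trans h2) hxy
    · simp [s18aSwap, h1, h2, hxy, Ne.symm hxy]
    · simp [s18aSwap, h1, h2, hxy, Ne.symm hxy]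
    · simp [s18aSwap, h1, h2, hxy, Ne.symm hxy]
  rw [Finset.prod_congr rfl (fun t _ => hfun t), Finset.prod_mul_distrib]
  unfold s18sgn
  rw [← Finset.prod_filter, ← Finset.prod_filter, Finset.prod_const, Finset.prod_const]

lemma s18_inj_elim_iff {k n : ℕ} (u v : Fin k → Fin n) :
    Function.Injective (Sum.elim u v) ↔
      Function.Injective u ∧ Function.Injective v ∧ ∀ s t, u s ≠ v t := by
  constructor
  · intro h
    refine ⟨fun s t hst => ?_, fun s t hst => ?_, fun s t hst => ?_⟩
    · have h2 := @h (Sum.inl s) (Sum.inl t) hst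
      exact Sum.inl_injective h2
    · have h2 := @h (Sum.inr s) (Sum.inr t) hst
      exact Sum.inr_injective h2
    · have h2 := @h (Sum.inl s) (Sum.inr t) hst
      simp at h2
  · rintro ⟨hu, hv, hd⟩ x y hxy
    match x, y with
    | Sum.inl s, Sum.inl t => exact congrArg Sum.inl (hu hxy)
    | Sum.inl s, Sum.inr t => exact absurd hxy (hd s t)
    | Sum.inr s, Sum.inl t => exact absurd hxy.symm (hd t s)
    | Sum.inr s, Sum.inr t => exact congrArg Sum.inr (hv hxy)

lemma s18_elim_bij {k : ℕ} {u v : Fin k → Fin (2*k)}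
    (h : Function.Injective (Sum.elim u v)) : Function.Bijective (Sum.elim u v) := by
  rw [Fintype.bijective_iff_injective_and_card]
  refine ⟨h, ?_⟩
  simp [Fintype.card_sum]
  omega

lemma s18_elim_compl {k : ℕ} {u v : Fin k → Fin (2*k)}
    (h : Function.Injective (Sum.elim u v)) :
    ∀ x, (∃ s, u s = x) ↔ ¬ (∃ s, v s = x) := by
  intro x
  constructor
  · rintro ⟨s, rfl⟩ ⟨t, ht⟩
    have h1 : Sum.elim u v (Sum.inl s) = Sum.elim u v (Sum.inr t) := by
      simp only [Sum.elim_inl, Sum.elim_inr]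
      exact ht.symm
    have h2 := h h1
    simp at h2
  · intro hnot
    obtain ⟨z, hz⟩ := (s18_elim_bij h).2 x
    match z with
    | Sum.inl s => exact ⟨s, hz⟩
    | Sum.inr t => exact absurd ⟨t, hz⟩ hnot

/-- the permutation carrying a joint enumeration `(u,v)` of `Fin n` to another `(u',v')` -/
def s18mkPerm {k n : ℕ} (u v u' v' : Fin k → Fin n)
    (h1 : Function.Bijective (Sum.elim u v))
    (h2 : Function.Bijective (Sum.elim u' v')) : Equiv.Perm (Fin n) :=
  (Equiv.ofBijective _ h1).symm.trans (Equiv.ofBijective _ h2)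

lemma s18mkPerm_u {k n : ℕ} (u v u' v' : Fin k → Fin n)
    (h1 : Function.Bijective (Sum.elim u v))
    (h2 : Function.Bijective (Sum.elim u' v')) (t : Fin k) :
    s18mkPerm u v u' v' h1 h2 (u t) = u' t := by
  have hs : (Equiv.ofBijective _ h1).symm (u t) = Sum.inl t := by
    rw [Equiv.symm_apply_eq]
    rfl
  show (Equiv.ofBijective _ h2) ((Equiv.ofBijective _ h1).symm (u t)) = u' t
  rw [hs]
  rfl

lemma s18mkPerm_v {k n : ℕ} (u v u' v' : Fin k → Fin n)
    (h1 : Function.Bijective (Sum.elim u v))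
    (h2 : Function.Bijective (Sum.elim u' v')) (t : Fin k) :
    s18mkPerm u v u' v' h1 h2 (v t) = v' t := by
  have hs : (Equiv.ofBijective _ h1).symm (v t) = Sum.inr t := by
    rw [Equiv.symm_apply_eq]
    rfl
  show (Equiv.ofBijective _ h2) ((Equiv.ofBijective _ h1).symm (v t)) = v' t
  rw [hs]
  rfl

lemma s18_param {k : ℕ} {u v w : Fin k → Fin (2*k)}
    (hE : Function.Injective (Sum.elim u v)) (hw : Function.Injective w)
    (hdisj : ∀ s t, w s ≠ v t) :
    ∃ σ : Equiv.Perm (Fin k), w = u ∘ ⇑σ := by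
  have hb := s18_elim_bij hE
  have key : ∀ t, ∃ s, u s = w t := by
    intro t
    obtain ⟨z, hz⟩ := hb.2 (w t)
    match z with
    | Sum.inl s => exact ⟨s, hz⟩
    | Sum.inr s => exact absurd hz.symm (hdisj t s)
  choose f hf using key
  have hfinj : Function.Injective f := by
    intro a b hab
    apply hw
    rw [← hf a, ← hf b, hab]
  refine ⟨Equiv.ofBijective f (Finite.injective_iff_bijective.1 hfinj), ?_⟩
  funext t
  exact (hf t).symm

lemma s18_V1 {k : ℕ} (v : Fin k → Fin (2*k)) (S : Finset (Fin (2*k))) (hScard : S.card = k)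
    (hiff : ∀ x, Odd (s18cnt (2*k) k v x) ↔ x ∈ S) :
    Function.Injective v ∧ ∀ x, (∃ s, v s = x) ↔ x ∈ S := by
  have htot : ∑ x, s18cnt (2*k) k v x = k := s18_cnt_sum v
  have hge1 : ∀ x ∈ S, 1 ≤ s18cnt (2*k) k v x := by
    intro x hx
    obtain ⟨m, hm⟩ := (hiff x).2 hx
    omega
  have hsum_ge : k ≤ ∑ x ∈ S, s18cnt (2*k) k v x := by
    calc k = S.card := hScard.symm
      _ = ∑ _x ∈ S, 1 := Finset.card_eq_sum_ones S
      _ ≤ ∑ x ∈ S, s18cnt (2*k) k v x := Finset.sum_le_sum hge1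
  have hsplit : ∑ x ∈ Finset.univ \ S, s18cnt (2*k) k v x
      + ∑ x ∈ S, s18cnt (2*k) k v x = k := by
    rw [Finset.sum_sdiff (Finset.subset_univ S)]
    exact htot
  have hzero : ∀ x, x ∉ S → s18cnt (2*k) k v x = 0 := by
    intro x hx
    have h0 : ∑ y ∈ Finset.univ \ S, s18cnt (2*k) k v y = 0 := by omega
    exact (Finset.sum_eq_zero_iff).1 h0 x (Finset.mem_sdiff.2 ⟨Finset.mem_univ x, hx⟩)
  have hone : ∀ x ∈ S, s18cnt (2*k) k v x = 1 := by
    intro x hx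
    by_contra hne
    have hk1 : 1 ≤ k := hScard ▸ Finset.card_pos.2 ⟨x, hx⟩
    have h2 : 2 ≤ s18cnt (2*k) k v x := by
      have := hge1 x hx; omega
    have hsume : s18cnt (2*k) k v x + ∑ y ∈ S.erase x, s18cnt (2*k) k v y
        = ∑ y ∈ S, s18cnt (2*k) k v y := Finset.add_sum_erase S _ hx
    have herase : (S.erase x).card ≤ ∑ y ∈ S.erase x, s18cnt (2*k) k v y := by
      calc (S.erase x).card = ∑ _y ∈ S.erase x, 1 := Finset.card_eq_sum_ones _
        _ ≤ _ := Finset.sum_le_sum (fun y hy => hge1 y (Finset.mem_of_mem_erase hy))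
    have hcarde : (S.erase x).card = k - 1 := by
      rw [Finset.card_erase_of_mem hx, hScard]
    omega
  have hmem : ∀ x, (∃ s, v s = x) ↔ x ∈ S := by
    intro x
    constructor
    · rintro ⟨s, rfl⟩
      by_contra hx
      have h0 := hzero _ hx
      have hpos : 0 < (Finset.univ.filter fun t => v t = v s).card :=
        Finset.card_pos.2 ⟨s, by simp⟩
      have hpos' : 0 < s18cnt (2*k) k v (v s) := hpos
      omega
    · intro hx
      have h1 := hone x hx
      have hpos : 0 < s18cnt (2*k) k v x := by omega
      obtain ⟨t, ht⟩ := Finset.card_pos.1 hpos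
      exact ⟨t, (Finset.mem_filter.1 ht).2⟩
  refine ⟨?_, hmem⟩
  intro s t hst
  have hxS : v s ∈ S := (hmem (v s)).1 ⟨s, rfl⟩
  have h1 := hone _ hxS
  have hs : s ∈ Finset.univ.filter (fun r => v r = v s) := by simp
  have ht : t ∈ Finset.univ.filter (fun r => v r = v s) := by simp [hst]
  exact (Finset.card_le_one.1 (le_of_eq h1) t ht s hs).symm

lemma s18_V0 {k : ℕ} (hk : 0 < k) (u v : Fin k → Fin (2*k)) (hu : Function.Injective u)
    (hC : ∀ x y, s18sgn (2*k) k u x * s18sgn (2*k) k v x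
      = s18sgn (2*k) k u y * s18sgn (2*k) k v y) :
    Function.Injective v ∧
      ((∀ x, (∃ s, v s = x) ↔ (∃ s, u s = x)) ∨
       (∀ x, (∃ s, v s = x) ↔ ¬∃ s, u s = x)) := by
  classical
  set U := Finset.image u Finset.univ with hU
  have hUcard : U.card = k := by
    rw [hU, Finset.card_image_of_injective _ hu, Finset.card_univ, Fintype.card_fin]
  have hmemU : ∀ x, x ∈ U ↔ ∃ s, u s = x := by
    intro x; simp [hU]
  have hsgnu : ∀ x, s18sgn (2*k) k u x = if x ∈ U then -1 else 1 := by
    intro x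
    unfold s18sgn
    rw [s18_cnt_inj hu]
    by_cases h : ∃ s, u s = x
    · rw [if_pos h, if_pos ((hmemU x).2 h)]; norm_num
    · rw [if_neg h, if_neg (fun hx => h ((hmemU x).1 hx))]; norm_num
  have hsgnv : ∀ x, s18sgn (2*k) k v x = if Odd (s18cnt (2*k) k v x) then -1 else 1 := by
    intro x
    unfold s18sgn
    rcases Nat.even_or_odd (s18cnt (2*k) k v x) with h | h
    · rw [if_neg (Nat.not_odd_iff_even.2 h), Even.neg_one_pow h]
    · rw [if_pos h, Odd.neg_one_pow h]
  have hmem0 : u ⟨0, hk⟩ ∈ U := (hmemU _).2 ⟨⟨0, hk⟩, rfl⟩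
  by_cases hodd : Odd (s18cnt (2*k) k v (u ⟨0, hk⟩))
  · have hiff : ∀ x, Odd (s18cnt (2*k) k v x) ↔ x ∈ U := by
      intro x
      have h := hC x (u ⟨0, hk⟩)
      rw [hsgnu, hsgnu, hsgnv, hsgnv, if_pos hmem0, if_pos hodd] at h
      by_cases hxU : x ∈ U <;> by_cases hox : Odd (s18cnt (2*k) k v x)
      · exact iff_of_true hox hxU
      · rw [if_pos hxU, if_neg hox] at h; norm_num at h
      · rw [if_neg hxU, if_pos hox] at h; norm_num at h
      · exact iff_of_false hox hxU
    have hV1 := s18_V1 v U hUcard hiff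
    exact ⟨hV1.1, Or.inl (fun x => (hV1.2 x).trans (hmemU x))⟩
  · have hiff : ∀ x, Odd (s18cnt (2*k) k v x) ↔ x ∈ Uᶜ := by
      intro x
      have h := hC x (u ⟨0, hk⟩)
      rw [hsgnu, hsgnu, hsgnv, hsgnv, if_pos hmem0, if_neg hodd] at h
      rw [Finset.mem_compl]
      by_cases hxU : x ∈ U <;> by_cases hox : Odd (s18cnt (2*k) k v x)
      · rw [if_pos hxU, if_pos hox] at h; norm_num at h
      · exact iff_of_false hox (fun hn => hn hxU)
      · exact iff_of_true hox hxU
      · rw [if_neg hxU, if_neg hox] at h; norm_num at h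
    have hccard : Uᶜ.card = k := by
      rw [Finset.card_compl, hUcard]
      simp only [Fintype.card_fin]
      omega
    have hV1 := s18_V1 v Uᶜ hccard hiff
    refine ⟨hV1.1, Or.inr (fun x => ?_)⟩
    exact (hV1.2 x).trans (Finset.mem_compl.trans (not_congr (hmemU x)))

end Statement18Aux

/-- `M_{k,2,2}` commutes with the diagonal action of `G(2,2,2k)`
on `V^{⊗k}` and with every endomorphism commuting with that action; that is, it is a
central element of the centralizer algebra `End_{G(2,2,2k)}(V^{⊗k})`. -/
theorem statement18 (k : ℕ) (hk : 0 < k) :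
    (∀ g ∈ GSet 2 2 (2 * k),
      Mop k ∘ₗ tensorPow (2 * k) k g = tensorPow (2 * k) k g ∘ₗ Mop k) ∧
    (∀ F : TP (2 * k) k →ₗ[ℂ] TP (2 * k) k,
      (∀ g ∈ GSet 2 2 (2 * k),
        F ∘ₗ tensorPow (2 * k) k g = tensorPow (2 * k) k g ∘ₗ F) →
      Mop k ∘ₗ F = F ∘ₗ Mop k) := by
  have hMop := s18_Mop_eq k
  constructor
  · -- Part 1 : `M` commutes with the action of `G(2,2,2k)`.
    intro g hg
    obtain ⟨π, a, ha, hpa, rfl⟩ := hg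
    have hprod : (∏ i, a i) = 1 := by
      have h22 : (2 : ℕ) / 2 = 1 := by norm_num
      rwa [h22, pow_one] at hpa
    rw [hMop,
      show tensorPow (2*k) k (monoMat (2*k) π a)
        = kernelMap (2*k) k (fun o i => ∏ t, monoMat (2*k) π a (o t) (i t)) from rfl,
      s18_kernelMap_comp, s18_kernelMap_comp]
    apply s18_kernelMap_congr
    intro o j
    have hT : ∀ u v : Fin k → Fin (2*k),
        (∏ t, monoMat (2*k) π a (u t) (v t))
          = if u = ⇑π ∘ v then (∏ t, a (v t)) else 0 := by
      intro u v
      rw [← s18_prod_ite_eq_fun u (⇑π ∘ v) (fun t => a (v t))]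
      exact Finset.prod_congr rfl (fun t _ => rfl)
    simp only [hT]
    have hL : (∑ i : Fin k → Fin (2*k),
        (if Function.Injective (Sum.elim i o) then (1:ℂ) else 0)
          * (if i = ⇑π ∘ j then (∏ t, a (j t)) else 0))
        = (if Function.Injective (Sum.elim (⇑π ∘ j) o) then (1:ℂ) else 0)
          * (∏ t, a (j t)) := by
      have step : ∀ i : Fin k → Fin (2*k),
          (if Function.Injective (Sum.elim i o) then (1:ℂ) else 0)
            * (if i = ⇑π ∘ j then (∏ t, a (j t)) else 0)
          = if i = ⇑π ∘ j then
              (if Function.Injective (Sum.elim i o) then (1:ℂ) else 0) * (∏ t, a (j t))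
            else 0 := by
        intro i
        by_cases h : i = ⇑π ∘ j <;> simp [h]
      rw [Finset.sum_congr rfl (fun i _ => step i),
        Finset.sum_ite_eq' Finset.univ (⇑π ∘ j)]
      simp
    have hR : (∑ i : Fin k → Fin (2*k),
        (if o = ⇑π ∘ i then (∏ t, a (i t)) else 0)
          * (if Function.Injective (Sum.elim j i) then (1:ℂ) else 0))
        = (∏ t, a (⇑π⁻¹ (o t)))
          * (if Function.Injective (Sum.elim j (⇑π⁻¹ ∘ o)) then (1:ℂ) else 0) := by
      have step : ∀ i : Fin k → Fin (2*k),
          (if o = ⇑π ∘ i then (∏ t, a (i t)) else 0)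
            * (if Function.Injective (Sum.elim j i) then (1:ℂ) else 0)
          = if i = ⇑π⁻¹ ∘ o then
              (∏ t, a (⇑π⁻¹ (o t)))
                * (if Function.Injective (Sum.elim j i) then (1:ℂ) else 0)
            else 0 := by
        intro i
        by_cases h : i = ⇑π⁻¹ ∘ o
        · subst h
          rw [if_pos (by funext t; simp), if_pos rfl]
          rfl
        · rw [if_neg ?_, if_neg h, zero_mul]
          intro ho'
          apply h
          funext t
          rw [ho']
          simp
      rw [Finset.sum_congr rfl (fun i _ => step i),
        Finset.sum_ite_eq' Finset.univ (⇑π⁻¹ ∘ o)]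
      simp
    rw [hL, hR]
    have hfun : Sum.elim j (⇑π⁻¹ ∘ o) = ⇑π⁻¹ ∘ Sum.elim (⇑π ∘ j) o := by
      funext z; cases z <;> simp
    have hcond : Function.Injective (Sum.elim (⇑π ∘ j) o)
        ↔ Function.Injective (Sum.elim j (⇑π⁻¹ ∘ o)) := by
      rw [hfun]
      constructor
      · intro h
        exact (Equiv.injective π⁻¹).comp h
      · intro h
        exact Function.Injective.of_comp h
    by_cases hI : Function.Injective (Sum.elim (⇑π ∘ j) o)
    · rw [if_pos hI, if_pos (hcond.1 hI), one_mul, mul_one]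
      have hbij : Function.Bijective (Sum.elim j (⇑π⁻¹ ∘ o)) := s18_elim_bij (hcond.1 hI)
      have hPQ : (∏ t, a (j t)) * (∏ t, a (⇑π⁻¹ (o t))) = 1 := by
        have h1 : ∏ z : Fin k ⊕ Fin k, a (Sum.elim j (⇑π⁻¹ ∘ o) z) = 1 := by
          rw [Function.Bijective.prod_comp hbij a]
          exact hprod
        have h2 : ∏ z : Fin k ⊕ Fin k, a (Sum.elim j (⇑π⁻¹ ∘ o) z)
            = (∏ t, a (j t)) * (∏ t, a (⇑π⁻¹ (o t))) := by
          rw [Fintype.prod_sum_type]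
          rfl
        rw [← h2]
        exact h1
      have hPP : (∏ t, a (j t)) * (∏ t, a (j t)) = 1 := by
        rw [← Finset.prod_mul_distrib]
        calc (∏ t, a (j t) * a (j t)) = ∏ t : Fin k, 1 := by
              apply Finset.prod_congr rfl
              intro t _
              have h := ha (j t)
              rwa [sq] at h
          _ = 1 := Finset.prod_const_one
      calc (∏ t, a (j t))
          = (∏ t, a (j t)) * ((∏ t, a (j t)) * (∏ t, a (⇑π⁻¹ (o t)))) := by
            rw [hPQ, mul_one]
        _ = ((∏ t, a (j t)) * (∏ t, a (j t))) * (∏ t, a (⇑π⁻¹ (o t))) := by ring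
        _ = ∏ t, a (⇑π⁻¹ (o t)) := by rw [hPP, one_mul]
    · rw [if_neg hI, if_neg (fun h => hI (hcond.2 h)), zero_mul, mul_zero]
  · -- Part 2 : `M` commutes with the centralizer algebra.
    intro F hF
    obtain ⟨K, hFK⟩ : ∃ K, F = kernelMap (2*k) k K := ⟨_, s18_eq_kernelMap (2*k) k F⟩
    -- permutation invariance of the kernel
    have hEperm : ∀ (π : Equiv.Perm (Fin (2*k))) (o j : Fin k → Fin (2*k)),
        K o (⇑π ∘ j) = K (⇑π⁻¹ ∘ o) j := by
      intro π o j
      have hg : monoMat (2*k) π (fun _ => (1:ℂ)) ∈ GSet 2 2 (2*k) :=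
        ⟨π, fun _ => 1, fun i => one_pow 2, by simp, rfl⟩
      have hcomm := hF _ hg
      rw [hFK] at hcomm
      have hker := s18_comm_kernel (K := K)
        (T := fun u v => ∏ t, monoMat (2*k) π (fun _ => (1:ℂ)) (u t) (v t)) hcomm o j
      have hT : ∀ u v : Fin k → Fin (2*k),
          (∏ t, monoMat (2*k) π (fun _ => (1:ℂ)) (u t) (v t))
            = if u = ⇑π ∘ v then 1 else 0 := by
        intro u v
        have h1 := s18_prod_ite_eq_fun u (⇑π ∘ v) (fun _ => (1:ℂ))
        rw [Finset.prod_const_one] at h1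
        rw [← h1]
        exact Finset.prod_congr rfl (fun t _ => rfl)
      simp only [hT] at hker
      have hcondeq : ∀ i : Fin k → Fin (2*k), (o = ⇑π ∘ i) = (i = ⇑π⁻¹ ∘ o) := by
        intro i
        apply propext
        constructor
        · intro h; funext t; rw [h]; simp
        · intro h; funext t; rw [h]; simp
      simp only [hcondeq, mul_ite, mul_one, mul_zero, ite_mul, one_mul, zero_mul,
        Finset.sum_ite_eq' Finset.univ, Finset.mem_univ, if_true] at hker
      exact hker
    have hP : ∀ (π : Equiv.Perm (Fin (2*k))) (u v : Fin k → Fin (2*k)),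
        K (⇑π ∘ u) (⇑π ∘ v) = K u v := by
      intro π u v
      rw [hEperm π (⇑π ∘ u) v]
      congr 1
      funext t
      simp
    -- sign invariance of the kernel
    have hES : ∀ (x y : Fin (2*k)), x ≠ y → ∀ (o j : Fin k → Fin (2*k)),
        (s18sgn (2*k) k o x * s18sgn (2*k) k o y) * K o j
          = (s18sgn (2*k) k j x * s18sgn (2*k) k j y) * K o j := by
      intro x y hxy o j
      have hg : monoMat (2*k) 1 (s18aSwap (2*k) x y) ∈ GSet 2 2 (2*k) :=
        ⟨1, s18aSwap (2*k) x y, fun i => s18aSwap_sq (2*k) x y i,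
          by rw [s18aSwap_prod hxy]; norm_num, rfl⟩
      have hcomm := hF _ hg
      rw [hFK] at hcomm
      have hker := s18_comm_kernel (K := K)
        (T := fun u v => ∏ t, monoMat (2*k) 1 (s18aSwap (2*k) x y) (u t) (v t)) hcomm o j
      have hT : ∀ u v : Fin k → Fin (2*k),
          (∏ t, monoMat (2*k) 1 (s18aSwap (2*k) x y) (u t) (v t))
            = if u = v then s18sgn (2*k) k v x * s18sgn (2*k) k v y else 0 := by
        intro u v
        have h1 : (∏ t, monoMat (2*k) 1 (s18aSwap (2*k) x y) (u t) (v t))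
            = ∏ t, (if u t = v t then s18aSwap (2*k) x y (v t) else 0) :=
          Finset.prod_congr rfl (fun t _ => rfl)
        rw [h1, s18_prod_ite_eq_fun u v (fun t => s18aSwap (2*k) x y (v t)),
          s18_prod_aSwap_comp hxy v]
      simp only [hT] at hker
      simp only [mul_ite, mul_zero, ite_mul, zero_mul,
        Finset.sum_ite_eq' Finset.univ, Finset.sum_ite_eq Finset.univ,
        Finset.mem_univ, if_true] at hker
      linear_combination -hker
    have hC : ∀ (o j : Fin k → Fin (2*k)), K o j ≠ 0 → ∀ x y,
        s18sgn (2*k) k o x * s18sgn (2*k) k j x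
          = s18sgn (2*k) k o y * s18sgn (2*k) k j y := by
      intro o j hne x y
      rcases eq_or_ne x y with rfl | hxy
      · rfl
      · have heq : s18sgn (2*k) k o x * s18sgn (2*k) k o y
            = s18sgn (2*k) k j x * s18sgn (2*k) k j y :=
          mul_right_cancel₀ hne (hES x y hxy o j)
        have sq1 := s18sgn_mul_self (2*k) k o y
        have sq2 := s18sgn_mul_self (2*k) k j x
        linear_combination (s18sgn (2*k) k o y * s18sgn (2*k) k j x) * heq
          - (s18sgn (2*k) k o x * s18sgn (2*k) k j x) * sq1
          + (s18sgn (2*k) k o y * s18sgn (2*k) k j y) * sq2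
    -- the main kernel identity
    rw [hMop, hFK, s18_kernelMap_comp, s18_kernelMap_comp]
    apply s18_kernelMap_congr
    intro o j
    simp only [ite_mul, one_mul, zero_mul, mul_ite, mul_one, mul_zero]
    have hfL : (∑ i ∈ Finset.univ.filter
          (fun i : Fin k → Fin (2*k) => Function.Injective (Sum.elim i o)), K i j)
        = ∑ i : Fin k → Fin (2*k),
            if Function.Injective (Sum.elim i o) then K i j else 0 :=
      Finset.sum_filter _ _
    have hfR : (∑ i ∈ Finset.univ.filter
          (fun i : Fin k → Fin (2*k) => Function.Injective (Sum.elim j i)), K o i)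
        = ∑ i : Fin k → Fin (2*k),
            if Function.Injective (Sum.elim j i) then K o i else 0 :=
      Finset.sum_filter _ _
    rw [← hfL, ← hfR]
    by_cases ho : Function.Injective o
    · by_cases hj : Function.Injective j
      · by_cases him : ∀ x, (∃ s, j s = x) ↔ (∃ s, o s = x)
        · -- `j` and `o` have the same image
          have hfilter : (Finset.univ.filter
                (fun i : Fin k → Fin (2*k) => Function.Injective (Sum.elim i o)))
              = Finset.univ.filter
                (fun i : Fin k → Fin (2*k) => Function.Injective (Sum.elim j i)) := by
            ext i
            simp only [Finset.mem_filter, Finset.mem_univ, true_and]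
            rw [s18_inj_elim_iff, s18_inj_elim_iff]
            constructor
            · rintro ⟨hi, -, hd⟩
              refine ⟨hj, hi, fun s t hst => ?_⟩
              obtain ⟨s', hs'⟩ := (him (j s)).1 ⟨s, rfl⟩
              exact hd t s' (hst.symm.trans hs'.symm)
            · rintro ⟨-, hi, hd⟩
              refine ⟨hi, ho, fun s t hst => ?_⟩
              obtain ⟨s', hs'⟩ := (him (o t)).2 ⟨t, rfl⟩
              exact hd s' s (hs'.trans hst.symm)
          rw [hfilter]
          apply Finset.sum_congr rfl
          intro i hi
          have hIji : Function.Injective (Sum.elim j i) := (Finset.mem_filter.1 hi).2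
          obtain ⟨-, hi', hd'⟩ := (s18_inj_elim_iff j i).1 hIji
          have h1 : Function.Bijective (Sum.elim i j) :=
            s18_elim_bij ((s18_inj_elim_iff i j).2
              ⟨hi', hj, fun s t hst => hd' t s hst.symm⟩)
          have h2 : Function.Bijective (Sum.elim o i) := by
            apply s18_elim_bij
            apply (s18_inj_elim_iff o i).2
            refine ⟨ho, hi', fun s t hst => ?_⟩
            obtain ⟨s', hs'⟩ := (him (o s)).2 ⟨s, rfl⟩
            exact hd' s' t (hs'.trans hst)
          have hu := s18mkPerm_u i j o i h1 h2
          have hv := s18mkPerm_v i j o i h1 h2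
          have hKeq := hP (s18mkPerm i j o i h1 h2) i j
          rw [show ⇑(s18mkPerm i j o i h1 h2) ∘ i = o from funext hu,
            show ⇑(s18mkPerm i j o i h1 h2) ∘ j = i from funext hv] at hKeq
          exact hKeq.symm
        · by_cases hjc : ∀ x, (∃ s, j s = x) ↔ ¬∃ s, o s = x
          · -- `j` and `o` have complementary images
            have hdjo : ∀ s t, j s ≠ o t := fun s t h => (hjc (o t)).1 ⟨s, h⟩ ⟨t, rfl⟩
            have hEjo : Function.Injective (Sum.elim j o) :=
              (s18_inj_elim_iff j o).2 ⟨hj, ho, hdjo⟩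
            have hEoj : Function.Injective (Sum.elim o j) :=
              (s18_inj_elim_iff o j).2 ⟨ho, hj, fun s t h => hdjo t s h.symm⟩
            have hL : (∑ i ∈ Finset.univ.filter
                  (fun i : Fin k → Fin (2*k) => Function.Injective (Sum.elim i o)), K i j)
                = ∑ σ : Equiv.Perm (Fin k), K (j ∘ ⇑σ) j := by
              symm
              apply Finset.sum_bij
                (fun (σ : Equiv.Perm (Fin k)) (_ : σ ∈ Finset.univ) => j ∘ ⇑σ)
              · intro σ _
                simp only [Finset.mem_filter, Finset.mem_univ, true_and]
                have hcomp : Sum.elim (j ∘ ⇑σ) o = Sum.elim j o ∘ Sum.map ⇑σ id := by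
                  funext z; cases z <;> rfl
                rw [hcomp]
                exact hEjo.comp
                  (Function.Injective.sumMap σ.injective Function.injective_id)
              · intro σ _ τ _ h
                apply Equiv.ext
                intro t
                exact hj (congrFun h t)
              · intro i hi
                have hIio : Function.Injective (Sum.elim i o) := (Finset.mem_filter.1 hi).2
                obtain ⟨hi', -, hd⟩ := (s18_inj_elim_iff i o).1 hIio
                obtain ⟨σ, hσ⟩ := s18_param hEjo hi' hd
                exact ⟨σ, Finset.mem_univ σ, hσ.symm⟩
              · intro σ _
                rfl
            have hR : (∑ i ∈ Finset.univ.filter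
                  (fun i : Fin k → Fin (2*k) => Function.Injective (Sum.elim j i)), K o i)
                = ∑ ρ : Equiv.Perm (Fin k), K o (o ∘ ⇑ρ) := by
              symm
              apply Finset.sum_bij
                (fun (ρ : Equiv.Perm (Fin k)) (_ : ρ ∈ Finset.univ) => o ∘ ⇑ρ)
              · intro ρ _
                simp only [Finset.mem_filter, Finset.mem_univ, true_and]
                have hcomp : Sum.elim j (o ∘ ⇑ρ) = Sum.elim j o ∘ Sum.map id ⇑ρ := by
                  funext z; cases z <;> rfl
                rw [hcomp]
                exact hEjo.comp
                  (Function.Injective.sumMap Function.injective_id ρ.injective)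
              · intro σ _ τ _ h
                apply Equiv.ext
                intro t
                exact ho (congrFun h t)
              · intro i hi
                have hIji : Function.Injective (Sum.elim j i) := (Finset.mem_filter.1 hi).2
                obtain ⟨-, hi', hd⟩ := (s18_inj_elim_iff j i).1 hIji
                obtain ⟨σ, hσ⟩ := s18_param hEoj hi' (fun s t h => hd t s h.symm)
                exact ⟨σ, Finset.mem_univ σ, hσ.symm⟩
              · intro ρ _
                rfl
            rw [hL, hR]
            rw [show (∑ ρ : Equiv.Perm (Fin k), K o (o ∘ ⇑ρ))
                = ∑ σ : Equiv.Perm (Fin k), K o (o ∘ ⇑σ⁻¹) from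
              (Fintype.sum_equiv (Equiv.inv (Equiv.Perm (Fin k))) _ _ (fun σ => rfl)).symm]
            apply Finset.sum_congr rfl
            intro σ _
            have h1 : Function.Bijective (Sum.elim j o) := s18_elim_bij hEjo
            have h2 : Function.Bijective (Sum.elim (o ∘ ⇑σ⁻¹) (j ∘ ⇑σ)) := by
              apply s18_elim_bij
              apply (s18_inj_elim_iff _ _).2
              exact ⟨ho.comp (Equiv.injective _), hj.comp (Equiv.injective _),
                fun s t h => hdjo (σ t) (σ⁻¹ s) h.symm⟩
            have hu := s18mkPerm_u j o (o ∘ ⇑σ⁻¹) (j ∘ ⇑σ) h1 h2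
            have hv := s18mkPerm_v j o (o ∘ ⇑σ⁻¹) (j ∘ ⇑σ) h1 h2
            have hKeq := hP (s18mkPerm j o (o ∘ ⇑σ⁻¹) (j ∘ ⇑σ) h1 h2) (j ∘ ⇑σ) j
            have e1 : ⇑(s18mkPerm j o (o ∘ ⇑σ⁻¹) (j ∘ ⇑σ) h1 h2) ∘ (j ∘ ⇑σ) = o := by
              funext t
              have h := hu (σ t)
              simpa using h
            have e2 : ⇑(s18mkPerm j o (o ∘ ⇑σ⁻¹) (j ∘ ⇑σ) h1 h2) ∘ j = o ∘ ⇑σ⁻¹ :=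
              funext hu
            rw [e1, e2] at hKeq
            exact hKeq.symm
          · -- mismatched images : all terms vanish
            refine Eq.trans (Finset.sum_eq_zero ?_) (Finset.sum_eq_zero ?_).symm
            · intro i hi
              have hIio : Function.Injective (Sum.elim i o) := (Finset.mem_filter.1 hi).2
              obtain ⟨hi', -, -⟩ := (s18_inj_elim_iff i o).1 hIio
              by_contra hne
              have hcomp := s18_elim_compl hIio
              obtain ⟨-, h' | h'⟩ := s18_V0 hk i j hi' (hC i j hne)
              · exact hjc fun x => (h' x).trans (hcomp x)
              · exact him fun x => by rw [h' x, hcomp x, not_not]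
            · intro i hi
              have hIji : Function.Injective (Sum.elim j i) := (Finset.mem_filter.1 hi).2
              obtain ⟨-, hi', -⟩ := (s18_inj_elim_iff j i).1 hIji
              by_contra hne
              have hcomp := s18_elim_compl hIji
              have hC' : ∀ x y, s18sgn (2*k) k i x * s18sgn (2*k) k o x
                  = s18sgn (2*k) k i y * s18sgn (2*k) k o y := by
                intro x y
                linear_combination hC o i hne x y
              obtain ⟨-, h' | h'⟩ := s18_V0 hk i o hi' hC'
              · exact hjc fun x => (hcomp x).trans (not_congr (h' x)).symm
              · exact him fun x => (hcomp x).trans (h' x).symm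
      · -- `j` not injective
        refine Eq.trans (Finset.sum_eq_zero ?_) (Finset.sum_eq_zero ?_).symm
        · intro i hi
          have hIio : Function.Injective (Sum.elim i o) := (Finset.mem_filter.1 hi).2
          obtain ⟨hi', -, -⟩ := (s18_inj_elim_iff i o).1 hIio
          by_contra hne
          exact hj (s18_V0 hk i j hi' (hC i j hne)).1
        · intro i hi
          have hIji : Function.Injective (Sum.elim j i) := (Finset.mem_filter.1 hi).2
          exact absurd ((s18_inj_elim_iff j i).1 hIji).1 hj
    · -- `o` not injective
      refine Eq.trans (Finset.sum_eq_zero ?_) (Finset.sum_eq_zero ?_).symm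
      · intro i hi
        have hIio : Function.Injective (Sum.elim i o) := (Finset.mem_filter.1 hi).2
        exact absurd ((s18_inj_elim_iff i o).1 hIio).2.1 ho
      · intro i hi
        have hIji : Function.Injective (Sum.elim j i) := (Finset.mem_filter.1 hi).2
        obtain ⟨-, hi', -⟩ := (s18_inj_elim_iff j i).1 hIji
        by_contra hne
        have hC' : ∀ x y, s18sgn (2*k) k i x * s18sgn (2*k) k o x
            = s18sgn (2*k) k i y * s18sgn (2*k) k o y := by
          intro x y
          linear_combination hC o i hne x y
        exact ho (s18_V0 hk i o hi' hC').1


end Tanabe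
end
end
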